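/- arXiv:1706.06665 — 2 statements merged into one kernel-verified Lean document; each statement's English description precedes it below -/
import Mathlib

section
/- Let z ∈ F_ℤ and v ∈ T̂₁(z). Let (q,r) be the lexicographically maximal FPF-visible inversion of z, and let (q₁, r₁) be any FPF-visible inversion of v. Then q₁ < q or r₁ < r. Consequently, if n ≥ r − q, then the maximal FPF-visible descent of every element of T̂_n(z) is strictly less than q. -/
open Equiv

noncomputable section

/-- The function underlying the permutation `Θ : i ↦ i - (-1)^i` of `ℤ`. -/
def thetaFun (i : ℤ) : ℤ := if Even i then i - 1 else i + 1

theorem thetaFun_invol : Function.Involutive thetaFun := by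
  intro i
  unfold thetaFun
  by_cases h : Even i
  · have h1 : ¬ Even (i - 1) := by simp [Int.even_sub_one, h]
    simp [h, h1]
  · have h1 : Even (i + 1) := Int.even_add_one.mpr h
    simp [h, h1]

/-- The permutation `Θ` of `ℤ`, interchanging `2k-1` and `2k` for every integer `k`. -/
def Theta : Equiv.Perm ℤ := thetaFun_invol.toPerm

/-- `F_ℤ`: the fixed-point-free involutions of `ℤ` agreeing with `Θ` outside a finite set. -/
def FZ : Set (Equiv.Perm ℤ) :=
  {z | z * z = 1 ∧ (∀ i : ℤ, z i ≠ i) ∧ {i : ℤ | z i ≠ Theta i}.Finite}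

/-- The set of inversions `Inv(w) = {(i,j) : i < j, w(i) > w(j)}`. -/
def InvSet (w : Equiv.Perm ℤ) : Set (ℤ × ℤ) := {p | p.1 < p.2 ∧ w p.2 < w p.1}

/-- `Cyc_ℤ(w) = {(i,j) : i < j, w(i) = j}`. -/
def CycSet (w : Equiv.Perm ℤ) : Set (ℤ × ℤ) := {p | p.1 < p.2 ∧ w p.1 = p.2}

/-- `ℓ̂_FPF(w) = |Inv(w) ∖ Cyc_ℤ(w)| / 2`. -/
def fpfLen (w : Equiv.Perm ℤ) : ℕ := ((InvSet w) \ (CycSet w)).ncard / 2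

/-- `(i,j)` is an FPF-visible inversion of `z`: `i < j` and `z(j) < min{i, z(i)}`. -/
def FpfVisInv (z : Equiv.Perm ℤ) (i j : ℤ) : Prop := i < j ∧ z j < min i (z i)

/-- `i` is an FPF-visible descent of `z`. -/
def FpfVisDes (z : Equiv.Perm ℤ) (i : ℤ) : Prop := FpfVisInv z i (i + 1)

/-- `i` is a visible descent of an involution `f` of `ℤ`: `f(i+1) ≤ min{i, f(i)}`. -/
def VisDes (f : ℤ → ℤ) (i : ℤ) : Prop := f (i + 1) ≤ min i (f i)

/-- `(q,r)` is the lexicographically maximal FPF-visible inversion of `z`. -/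
def IsMaxVisInv (z : Equiv.Perm ℤ) (q r : ℤ) : Prop :=
  FpfVisInv z q r ∧ ∀ a b : ℤ, FpfVisInv z a b → a < q ∨ (a = q ∧ b ≤ r)

/-- `Ψ̂⁺(y, r) = {z ∈ F_ℤ : ℓ̂_FPF(z) = ℓ̂_FPF(y) + 1 and z = (r,j) y (r,j) for some j > r}`. -/
def PsiPlus (y : Equiv.Perm ℤ) (r : ℤ) : Set (Equiv.Perm ℤ) :=
  {z | z ∈ FZ ∧ fpfLen z = fpfLen y + 1 ∧
    ∃ j : ℤ, r < j ∧ z = Equiv.swap r j * y * Equiv.swap r j}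

/-- `Ψ̂⁻(y, r) = {z ∈ F_ℤ : ℓ̂_FPF(z) = ℓ̂_FPF(y) + 1 and z = (i,r) y (i,r) for some i < r}`. -/
def PsiMinus (y : Equiv.Perm ℤ) (r : ℤ) : Set (Equiv.Perm ℤ) :=
  {z | z ∈ FZ ∧ fpfLen z = fpfLen y + 1 ∧
    ∃ i : ℤ, i < r ∧ z = Equiv.swap i r * y * Equiv.swap i r}

open Classical in
/-- The involution `I(z)` of `ℤ` (as a function): its nontrivial cycles are exactly the
pairs `(p,q) ∈ Cyc_ℤ(z)` for which there exists `(a,b) ∈ Cyc_ℤ(z)` with `p < b < q`. -/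
def Imap (z : Equiv.Perm ℤ) (i : ℤ) : ℤ :=
  if ∃ a b : ℤ, a < b ∧ z a = b ∧ min i (z i) < b ∧ b < max i (z i) then z i else i

/-- `f` is the involution `(φ₀, n+1)(φ₁, n+2)⋯(φ_{r-1}, n+r)` of `ℤ`, where
`φ₀ < φ₁ < ⋯ < φ_{r-1} ≤ n` and `r ≥ 1`. -/
def IsIGrassWith (f : ℤ → ℤ) (n : ℤ) (r : ℕ) (φ : ℕ → ℤ) : Prop :=
  1 ≤ r ∧
  (∀ i j : ℕ, i < j → j < r → φ i < φ j) ∧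
  (∀ i : ℕ, i < r → φ i ≤ n) ∧
  (∀ i : ℕ, i < r → f (φ i) = n + (i : ℤ) + 1 ∧ f (n + (i : ℤ) + 1) = φ i) ∧
  (∀ x : ℤ, (∀ i : ℕ, i < r → x ≠ φ i ∧ x ≠ n + (i : ℤ) + 1) → f x = x)

/-- `f` is I-Grassmannian: the identity, or `(φ₁, n+1)⋯(φ_r, n+r)` as above. -/
def IsIGrassFn (f : ℤ → ℤ) : Prop := f = id ∨ ∃ n r φ, IsIGrassWith f n r φ

/-- `z ∈ F_ℤ` is FPF-Grassmannian if `I(z)` is I-Grassmannian. -/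
def IsFPFGrass (z : Equiv.Perm ℤ) : Prop := IsIGrassFn (Imap z)

open Classical in
/-- `η_FPF(z) = (q,r) z (q,r)` where `(q,r)` is the lexicographically maximal FPF-visible
inversion of `z` (and `η_FPF(Θ) = Θ` by convention; `Θ` has no FPF-visible inversions). -/
def etaFPF (z : Equiv.Perm ℤ) : Equiv.Perm ℤ :=
  if h : ∃ p : ℤ × ℤ, IsMaxVisInv z p.1 p.2 then
    Equiv.swap h.choose.1 h.choose.2 * z * Equiv.swap h.choose.1 h.choose.2
  else z

open Classical in
/-- The maximal FPF-visible descent of `z` (junk value `0` if there is none). -/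
def maxFpfVisDes (z : Equiv.Perm ℤ) : ℤ :=
  if h : ∃ q : ℤ, IsGreatest {i : ℤ | FpfVisDes z i} q then h.choose else 0

open Classical in
/-- `T̂₁(z)`: the children of `z` in the FPF-involution Lascoux–Schützenberger tree. -/
def That1 (z : Equiv.Perm ℤ) : Set (Equiv.Perm ℤ) :=
  if IsFPFGrass z then ∅ else PsiMinus (etaFPF z) (etaFPF z (maxFpfVisDes z))

/-- `T̂_n(z)`: `T̂₀(z) = {z}` and `T̂_n(z) = ⋃_{v ∈ T̂_{n-1}(z)} T̂₁(v)`. -/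
def That : ℕ → Equiv.Perm ℤ → Set (Equiv.Perm ℤ)
  | 0, z => {z}
  | n + 1, z => ⋃ v ∈ That n z, That1 v
section Prelim
open Equiv

lemma swConj_apply (x : Perm ℤ) (a b m : ℤ) :
    (Equiv.swap a b * x * Equiv.swap a b) m = Equiv.swap a b (x (Equiv.swap a b m)) := rfl

lemma FZ_invol {x : Perm ℤ} (hx : x ∈ FZ) (m : ℤ) : x (x m) = m := by
  have h1 : (x * x) m = (1 : Perm ℤ) m := by rw [hx.1]
  simpa using h1

lemma FZ_fpf {x : Perm ℤ} (hx : x ∈ FZ) (m : ℤ) : x m ≠ m := hx.2.1 m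

lemma FZ_apply_eq_iff {x : Perm ℤ} (hx : x ∈ FZ) {a b : ℤ} : x a = b ↔ a = x b := by
  constructor
  · rintro rfl; exact (FZ_invol hx a).symm
  · rintro rfl; exact FZ_invol hx b

lemma FZ_conj_mem {x : Perm ℤ} (hx : x ∈ FZ) (a b : ℤ) :
    Equiv.swap a b * x * Equiv.swap a b ∈ FZ := by
  obtain ⟨h1, h2, h3⟩ := hx
  refine ⟨?_, ?_, ?_⟩
  · have : (Equiv.swap a b * x * Equiv.swap a b) * (Equiv.swap a b * x * Equiv.swap a b)
        = Equiv.swap a b * (x * x) * Equiv.swap a b := by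
      simp only [mul_assoc]
      congr 2
      rw [← mul_assoc (Equiv.swap a b), Equiv.swap_mul_self, one_mul]
    rw [this, h1]
    simp [Equiv.swap_mul_self]
  · intro m hm
    rw [swConj_apply] at hm
    have : x (Equiv.swap a b m) = Equiv.swap a b m := by
      have := congrArg (Equiv.swap a b) hm
      simpa using this
    exact h2 _ this
  · apply Set.Finite.subset (Set.Finite.union h3
      ((((Set.finite_singleton (x b)).insert (x a)).insert b).insert a))
    intro m hm
    by_cases hmem : m = a ∨ m = b ∨ m = x a ∨ m = x b
    · right; rcases hmem with h|h|h|h <;> simp [h]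
    · push_neg at hmem
      obtain ⟨ha, hb, hxa, hxb⟩ := hmem
      left
      simp only [Set.mem_setOf_eq] at hm ⊢
      rw [swConj_apply, Equiv.swap_apply_of_ne_of_ne ha hb] at hm
      rwa [Equiv.swap_apply_of_ne_of_ne] at hm
      · intro h; exact hxa (by rw [← h, FZ_invol ⟨h1,h2,h3⟩])
      · intro h; exact hxb (by rw [← h, FZ_invol ⟨h1,h2,h3⟩])

end Prelim
section Finiteness
open Equiv

lemma theta_pm (m : ℤ) : thetaFun m = m - 1 ∨ thetaFun m = m + 1 := by
  unfold thetaFun; split <;> simp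

lemma theta_inv_char {a b : ℤ} (hab : a < b) (h : thetaFun b < thetaFun a) :
    thetaFun a = b := by
  have ha := theta_pm a
  have hb := theta_pm b
  have hb1 : b = a + 1 := by omega
  subst hb1
  unfold thetaFun at *
  by_cases he : Even a
  · have : ¬ Even (a+1) := by simp [Int.even_add_one, he]
    simp [he, this] at h ⊢
    omega
  · have : Even (a+1) := Int.even_add_one.mpr he
    simp [he, this] at h ⊢

/-- For `x ∈ FZ`, there is a bound `N` controlling where `x` equals `Θ`. -/
lemma FZ_bound {x : Perm ℤ} (hx : x ∈ FZ) :
    ∃ N : ℤ, 2 ≤ N ∧ (∀ m : ℤ, (N ≤ m ∨ m ≤ -N) → x m = thetaFun m) ∧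
      (∀ m : ℤ, (N - 1 ≤ x m ∨ x m ≤ -(N-1)) → x m = thetaFun m) := by
  have hS : ({i : ℤ | x i ≠ Theta i} ∪ x '' {i : ℤ | x i ≠ Theta i}).Finite :=
    hx.2.2.union (hx.2.2.image x)
  obtain ⟨ub, hub⟩ := hS.bddAbove
  obtain ⟨lb, hlb⟩ := hS.bddBelow
  set T := ({i : ℤ | x i ≠ Theta i} ∪ x '' {i : ℤ | x i ≠ Theta i}) with hT
  have hbox : ∀ m ∈ T, lb ≤ m ∧ m ≤ ub := fun m hm => ⟨hlb hm, hub hm⟩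
  set N : ℤ := max (max ub (-lb)) 0 + 2 with hN
  have h0 : max ub (-lb) ≤ max (max ub (-lb)) 0 := le_max_left _ _
  have h00 : (0:ℤ) ≤ max (max ub (-lb)) 0 := le_max_right _ _
  have hubN : ub ≤ N - 2 := by
    have := le_max_left ub (-lb); omega
  have hlbN : -(N-2) ≤ lb := by
    have := le_max_right ub (-lb); omega
  refine ⟨N, by omega, ?_, ?_⟩
  · intro m hm
    by_contra hne
    have hmem : m ∈ T := Or.inl (by simpa [Theta, thetaFun_invol] using hne)
    have := hbox m hmem
    omega
  · intro m hm
    by_contra hne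
    have hmT : m ∈ T := Or.inl (by simpa [Theta, thetaFun_invol] using hne)
    have hxmT : x m ∈ T := Or.inr ⟨m, (by simpa [Theta, thetaFun_invol] using hne), rfl⟩
    have := hbox (x m) hxmT
    omega

/-- The FPF-inversion set of an element of `FZ` is finite. -/
lemma D_finite {x : Perm ℤ} (hx : x ∈ FZ) : (InvSet x \ CycSet x).Finite := by
  obtain ⟨N, hN2, H1, H2⟩ := FZ_bound hx
  apply Set.Finite.subset ((Set.finite_Icc (-N) N).prod (Set.finite_Icc (-N) N))
  rintro ⟨a, b⟩ ⟨⟨hab, hinv⟩, hcyc⟩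
  simp only [InvSet, CycSet, Set.mem_setOf_eq, not_and] at hab hinv hcyc
  have hncyc : x a ≠ b := fun h => hcyc hab h
  have hbN : b ≤ N := by
    by_contra hb
    push_neg at hb
    have hxb : x b = thetaFun b := H1 b (by omega)
    have h1 : b - 1 ≤ x b := by have := theta_pm b; omega
    have hxa : x a = thetaFun a := H2 a (Or.inl (by omega))
    exact hncyc (hxa.trans (theta_inv_char hab (by rw [← hxa, ← hxb]; exact hinv)))
  have haN : -N ≤ a := by
    by_contra ha
    push_neg at ha
    have hxa : x a = thetaFun a := H1 a (by omega)
    have h1 : x a ≤ a + 1 := by have := theta_pm a; omega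
    have hxb : x b = thetaFun b := H2 b (Or.inr (by omega))
    exact hncyc (hxa.trans (theta_inv_char hab (by rw [← hxa, ← hxb]; exact hinv)))
  exact ⟨⟨by omega, by omega⟩, ⟨by omega, by omega⟩⟩

/-- Visible inversions are FPF-inversions. -/
lemma visInv_mem_D {x : Perm ℤ} (hx : x ∈ FZ) {a b : ℤ} (h : FpfVisInv x a b) :
    (a, b) ∈ InvSet x \ CycSet x := by
  obtain ⟨hab, hv⟩ := h
  have h1 : x b < a := lt_of_lt_of_le hv (min_le_left _ _)
  have h2 : x b < x a := lt_of_lt_of_le hv (min_le_right _ _)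
  refine ⟨⟨hab, h2⟩, ?_⟩
  rintro ⟨-, hc⟩
  simp only at hc
  have : x b = a := by rw [← hc, FZ_invol hx]
  omega

/-- If `x` has a visible inversion, it has a lexicographically maximal one. -/
lemma exists_maxVisInv {x : Perm ℤ} (hx : x ∈ FZ) {a b : ℤ} (h : FpfVisInv x a b) :
    ∃ Q R : ℤ, IsMaxVisInv x Q R := by
  have hfin : {t : ℤ × ℤ | FpfVisInv x t.1 t.2}.Finite :=
    (D_finite hx).subset (fun t ht => visInv_mem_D hx ht)
  set V : Finset (ℤ ×ₗ ℤ) := hfin.toFinset.image (toLex) with hV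
  have hne : V.Nonempty :=
    ⟨toLex (a, b), Finset.mem_image_of_mem _ (by rw [hfin.mem_toFinset]; exact h)⟩
  set M := V.max' hne with hM
  have hMV : M ∈ V := V.max'_mem hne
  obtain ⟨t, ht, hteq⟩ := Finset.mem_image.mp hMV
  rw [hfin.mem_toFinset] at ht
  refine ⟨(ofLex M).1, (ofLex M).2, ?_, ?_⟩
  · rw [← hteq]; exact ht
  · intro c d hcd
    have hmem : toLex (c, d) ∈ V :=
      Finset.mem_image_of_mem _ (by rw [hfin.mem_toFinset]; exact hcd)
    have hle := V.le_max' _ hmem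
    rw [← hM] at hle
    have h2 : toLex (c,d) ≤ toLex ((ofLex M).1, (ofLex M).2) := by simpa using hle
    rwa [Prod.Lex.le_iff] at h2

end Finiteness

section Evenness

/-- A finite set with a fixed-point-free involution has even cardinality. -/
lemma even_ncard_of_fpf_invol {α : Type*} (e : α → α) :
    ∀ (n : ℕ) (S : Set α), S.Finite → S.ncard = n →
      (∀ a ∈ S, e a ∈ S) → (∀ a ∈ S, e (e a) = a) → (∀ a ∈ S, e a ≠ a) → Even n := by
  intro n
  induction n using Nat.strong_induction_on with
  | _ n ih =>
    intro S hS hcard hmap hinv hne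
    rcases Set.eq_empty_or_nonempty S with hemp | ⟨a, ha⟩
    · subst hemp
      have hn0 : n = 0 := by simpa using hcard.symm
      subst hn0; exact Even.zero
    · have hea : e a ∈ S := hmap a ha
      have heaa : e a ≠ a := hne a ha
      set S' := S \ {a, e a} with hS'
      have hS'fin : S'.Finite := hS.diff
      have hsub : ({a, e a} : Set α) ⊆ S := by
        intro t ht
        rcases ht with rfl | ht
        · exact ha
        · rw [Set.mem_singleton_iff] at ht; subst ht; exact hea
      have hpair : ({a, e a} : Set α).ncard = 2 := Set.ncard_pair (Ne.symm heaa)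
      have hle2 : 2 ≤ n := by
        rw [← hcard, ← hpair]
        exact Set.ncard_le_ncard hsub hS
      have hcard' : S'.ncard = n - 2 := by
        rw [hS', Set.ncard_diff hsub, hpair, hcard]
      have hlt : n - 2 < n := by omega
      have hih := ih (n-2) hlt S' hS'fin hcard' ?_ ?_ ?_
      · obtain ⟨k, hk⟩ := hih
        exact ⟨k + 1, by omega⟩
      · intro t ht
        obtain ⟨htS, htn⟩ := ht
        refine ⟨hmap t htS, ?_⟩
        simp only [Set.mem_insert_iff, Set.mem_singleton_iff] at htn ⊢
        push_neg at htn ⊢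
        constructor
        · intro h; exact htn.2 (by rw [← h, hinv t htS])
        · intro h
          have h2 := congrArg e h
          rw [hinv t htS, hinv a ha] at h2
          exact htn.1 h2
      · intro t ht; exact hinv t ht.1
      · intro t ht; exact hne t ht.1

/-- The FPF-inversion set of an `FZ` element has even cardinality. -/
lemma D_even {x : Perm ℤ} (hx : x ∈ FZ) : Even (InvSet x \ CycSet x).ncard := by
  apply even_ncard_of_fpf_invol (fun t : ℤ × ℤ => (x t.2, x t.1)) _ _ (D_finite hx) rfl
  · rintro ⟨a, b⟩ ⟨⟨hab, hinv⟩, hcyc⟩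
    simp only [InvSet, CycSet, Set.mem_setOf_eq, not_and] at *
    have hncyc : x a ≠ b := fun h => hcyc hab h
    refine ⟨⟨hinv, by rw [FZ_invol hx, FZ_invol hx]; exact hab⟩, ?_⟩
    rintro ⟨-, hc⟩
    simp only [FZ_invol hx] at hc
    exact hncyc hc.symm
  · rintro ⟨a, b⟩ _
    simp [FZ_invol hx]
  · rintro ⟨a, b⟩ ⟨⟨hab, hinv⟩, hcyc⟩
    simp only [InvSet, CycSet, Set.mem_setOf_eq, not_and] at *
    intro h
    rw [Prod.ext_iff] at h
    obtain ⟨h1, h2⟩ := h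
    simp only at h1 h2
    exact (hcyc hab) h2

end Evenness
section LemA
open Equiv

lemma mem_D_iff (w : Perm ℤ) (c d : ℤ) :
    (c, d) ∈ InvSet w \ CycSet w ↔ c < d ∧ w d < w c ∧ w c ≠ d := by
  simp only [InvSet, CycSet, Set.mem_diff, Set.mem_setOf_eq, not_and]
  constructor
  · rintro ⟨⟨h1, h2⟩, h3⟩
    exact ⟨h1, h2, fun h => h3 h1 h⟩
  · rintro ⟨h1, h2, h3⟩
    exact ⟨⟨h1, h2⟩, fun _ h => h3 h⟩

/-- sort the image of a pair under a permutation -/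
def sortPair (s : Perm ℤ) (t : ℤ × ℤ) : ℤ × ℤ :=
  if s t.1 ≤ s t.2 then (s t.1, s t.2) else (s t.2, s t.1)

lemma sortPair_invol (s : Perm ℤ) (hs : ∀ m, s (s m) = m) (t : ℤ × ℤ) (h : t.1 < t.2) :
    sortPair s (sortPair s t) = t := by
  have hne : s t.1 ≠ s t.2 := fun hc => (by omega : t.1 ≠ t.2) (s.injective hc)
  obtain ⟨c, d⟩ := t
  simp only at hne h
  unfold sortPair
  dsimp only
  split
  · rw [if_pos (by rw [hs, hs]; omega)]
    rw [hs, hs]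
  · rw [if_neg (by rw [hs, hs]; omega)]
    rw [hs, hs]

/-- **Lemma A**: if `x ∈ FZ` has cycles `{i,a}` and `{p,b}` with `i<p<a<b`
(a "crossing"), then uncrossing them increases the FPF-inversion count by
at least 2. -/
lemma lemA {x : Perm ℤ} {i p a b : ℤ} (hx : x ∈ FZ)
    (hip : i < p) (hpa : p < a) (hab : a < b)
    (hxi : x i = a) (hxp : x p = b) :
    (InvSet x \ CycSet x).ncard + 2 ≤
      (InvSet (Equiv.swap i p * x * Equiv.swap i p) \
        CycSet (Equiv.swap i p * x * Equiv.swap i p)).ncard := by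
  classical
  set s : Perm ℤ := Equiv.swap i p with hs
  set x' : Perm ℤ := s * x * s with hx'def
  have hx' : x' ∈ FZ := FZ_conj_mem hx i p
  have hxa : x a = i := by rw [← hxi, FZ_invol hx]
  have hxb : x b = p := by rw [← hxp, FZ_invol hx]
  have vi : ∀ m, x m = i ↔ m = a := fun m => by rw [FZ_apply_eq_iff hx, hxi]
  have vp : ∀ m, x m = p ↔ m = b := fun m => by rw [FZ_apply_eq_iff hx, hxp]
  have va : ∀ m, x m = a ↔ m = i := fun m => by rw [FZ_apply_eq_iff hx, hxa]
  have vb : ∀ m, x m = b ↔ m = p := fun m => by rw [FZ_apply_eq_iff hx, hxb]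
  have si : s i = p := Equiv.swap_apply_left i p
  have sp : s p = i := Equiv.swap_apply_right i p
  have sinv : ∀ m, s (s m) = m := fun m => Equiv.swap_apply_self i p m
  have so : ∀ m, m ≠ i → m ≠ p → s m = m := fun m h1 h2 => Equiv.swap_apply_of_ne_of_ne h1 h2
  have e1 : x' i = b := by
    simp only [hx'def, Perm.mul_apply, si, hxp]
    exact so b (by omega) (by omega)
  have e2 : x' p = a := by
    simp only [hx'def, Perm.mul_apply, sp, hxi]
    exact so a (by omega) (by omega)
  have e3 : x' a = p := by
    simp only [hx'def, Perm.mul_apply, so a (by omega) (by omega), hxa, si]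
  have e4 : x' b = i := by
    simp only [hx'def, Perm.mul_apply, so b (by omega) (by omega), hxb, sp]
  have e5 : ∀ m, m ≠ i → m ≠ p → m ≠ a → m ≠ b → x' m = x m := by
    intro m h1 h2 h3 h4
    simp only [hx'def, Perm.mul_apply, so m h1 h2]
    exact so (x m) (fun h => h3 ((vi m).mp h)) (fun h => h4 ((vp m).mp h))
  set D : Set (ℤ × ℤ) := InvSet x \ CycSet x with hD
  set D' : Set (ℤ × ℤ) := InvSet x' \ CycSet x' with hD'
  have hDfin : D.Finite := D_finite hx
  have hD'fin : D'.Finite := D_finite hx'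
  set F : ℤ × ℤ → ℤ × ℤ := sortPair s with hF
  have Fev : ∀ c d c' d' : ℤ, s c = c' → s d = d' → c' < d' → F (c, d) = (c', d') := by
    intro c d c' d' h1 h2 h3
    show sortPair s (c, d) = (c', d')
    unfold sortPair
    dsimp only
    rw [h1, h2, if_pos (le_of_lt h3)]
  have Fev' : ∀ c d c' d' : ℤ, s c = c' → s d = d' → d' < c' → F (c, d) = (d', c') := by
    intro c d c' d' h1 h2 h3
    show sortPair s (c, d) = (d', c')
    unfold sortPair
    dsimp only
    rw [h1, h2, if_neg (not_le.mpr h3)]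
  have memD : ∀ c d : ℤ, ((c, d) ∈ D ↔ c < d ∧ x d < x c ∧ x c ≠ d) := fun c d => mem_D_iff x c d
  have memD' : ∀ c d : ℤ, ((c, d) ∈ D' ↔ c < d ∧ x' d < x' c ∧ x' c ≠ d) := fun c d => mem_D_iff x' c d
  set Phi : ℤ × ℤ → ℤ × ℤ := fun t =>
    if F t ∈ D' then F t
    else if t.1 = i then t
    else if t.2 = p then t
    else if t.2 = a then (t.1, b)
    else (a, t.2) with hPhi
  -- shapes of exceptional pairs
  have charA : ∀ c d : ℤ, (c, d) ∈ D → F (c, d) ∉ D' →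
      (c = i ∧ i < d ∧ d < p ∧ x d < a) ∨
      (d = p ∧ i < c ∧ c < p ∧ b < x c) ∨
      (d = a ∧ c < a ∧ c ≠ i ∧ c ≠ p ∧ i < x c ∧ x c < p) ∨
      (c = b ∧ b < d ∧ i < x d ∧ x d < p) := by
    intro c d hcd hnP
    rw [memD] at hcd
    obtain ⟨h1, h2, h3⟩ := hcd
    by_cases hci : c = i
    · rw [hci, hxi] at h2 h3
      left
      refine ⟨hci, by omega, ?_, h2⟩
      by_contra hdple
      push_neg at hdple
      have hdnp : d ≠ p := by
        intro h; rw [h, hxp] at h2; omega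
      have hdp' : p < d := by omega
      apply hnP
      rw [hci]
      by_cases hdb : d = b
      · rw [Fev i d p d si (by rw [hdb]; exact so b (by omega) (by omega)) (by omega), memD',
          e2, hdb, e4]
        exact ⟨by omega, by omega, by omega⟩
      · have hda : d ≠ a := fun h => h3 h.symm
        rw [Fev i d p d si (so d (by omega) (by omega)) (by omega), memD',
          e5 d (by omega) (by omega) hda hdb, e2]
        exact ⟨by omega, by omega, by omega⟩
    · by_cases hdp : d = p
      · rw [hdp] at h1 h2 h3
        rw [hxp] at h2
        by_cases hci2 : i < c
        · right; left; exact ⟨hdp, hci2, by omega, h2⟩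
        · exfalso
          have hci3 : c < i := by omega
          apply hnP
          rw [hdp]
          rw [Fev c p c i (so c (by omega) (by omega)) sp (by omega), memD', e1,
            e5 c (by omega) (by omega) (by omega) (by omega)]
          refine ⟨by omega, by omega, ?_⟩
          intro h
          rw [vi c] at h
          omega
      · by_cases hda : d = a
        · rw [hda] at h1 h2 h3
          rw [hxa] at h2
          by_cases hcp : c = p
          · exfalso
            apply hnP
            rw [hda, hcp]
            rw [Fev p a i a sp (so a (by omega) (by omega)) (by omega), memD', e3, e1]
            exact ⟨by omega, by omega, by omega⟩
          · have hcb : c ≠ b := by omega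
            have hxc_lt : x c < p := by
              by_contra hge
              push_neg at hge
              have hxcnp : x c ≠ p := fun h => hcb ((vp c).mp h)
              apply hnP
              rw [hda]
              rw [Fev c a c a (so c hci (by omega)) (so a (by omega) (by omega)) (by omega),
                memD', e3, e5 c hci hcp (by omega) hcb]
              refine ⟨by omega, by omega, ?_⟩
              intro h
              rw [va c] at h
              omega
            right; right; left
            exact ⟨hda, by omega, hci, hcp, h2, hxc_lt⟩
        · by_cases hcb : c = b
          · rw [hcb] at h1 h2 h3
            rw [hxb] at h2 h3
            right; right; right
            refine ⟨hcb, by omega, ?_, h2⟩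
            by_contra hle
            push_neg at hle
            have hdi : x d ≠ i := by
              intro h
              rw [vi d] at h
              omega
            apply hnP
            have hdE : d ≠ i ∧ d ≠ p ∧ d ≠ a ∧ d ≠ b := by omega
            rw [hcb]
            rw [Fev b d b d (so b (by omega) (by omega)) (so d hdE.1 hdE.2.1) (by omega),
              memD', e4, e5 d hdE.1 hdE.2.1 hdE.2.2.1 hdE.2.2.2]
            exact ⟨by omega, by omega, by omega⟩
          · exfalso
            apply hnP
            by_cases hdi : d = i
            · rw [hdi] at h1 h2 h3
              rw [hxi] at h2
              have hcE : c ≠ i ∧ c ≠ p ∧ c ≠ a ∧ c ≠ b := by omega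
              rw [hdi]
              rw [Fev c i c p (so c hcE.1 hcE.2.1) si (by omega), memD', e2,
                e5 c hcE.1 hcE.2.1 hcE.2.2.1 hcE.2.2.2]
              refine ⟨by omega, by omega, ?_⟩
              intro h
              rw [vp c] at h
              omega
            · by_cases hcp : c = p
              · rw [hcp] at h1 h2 h3
                rw [hxp] at h2 h3
                have hdE : d ≠ i ∧ d ≠ p ∧ d ≠ a ∧ d ≠ b := ⟨hdi, hdp, hda, fun h => h3 h.symm⟩
                rw [hcp]
                rw [Fev p d i d sp (so d hdE.1 hdE.2.1) (by omega), memD', e1,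
                  e5 d hdE.1 hdE.2.1 hdE.2.2.1 hdE.2.2.2]
                exact ⟨by omega, by omega, by omega⟩
              · by_cases hca : c = a
                · rw [hca] at h1 h2 h3
                  rw [hxa] at h2 h3
                  have hdb : d ≠ b := by
                    intro h
                    rw [h, hxb] at h2
                    omega
                  have hdE : d ≠ i ∧ d ≠ p ∧ d ≠ a ∧ d ≠ b := ⟨hdi, hdp, hda, hdb⟩
                  rw [hca]
                  rw [Fev a d a d (so a (by omega) (by omega)) (so d hdE.1 hdE.2.1) (by omega),
                    memD', e3, e5 d hdE.1 hdE.2.1 hdE.2.2.1 hdE.2.2.2]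
                  exact ⟨by omega, by omega, by omega⟩
                · by_cases hdb : d = b
                  · rw [hdb] at h1 h2 h3
                    rw [hxb] at h2
                    have hcE : c ≠ i ∧ c ≠ p ∧ c ≠ a ∧ c ≠ b := ⟨hci, hcp, hca, hcb⟩
                    rw [hdb]
                    rw [Fev c b c b (so c hcE.1 hcE.2.1) (so b (by omega) (by omega)) (by omega),
                      memD', e4, e5 c hcE.1 hcE.2.1 hcE.2.2.1 hcE.2.2.2]
                    refine ⟨by omega, by omega, ?_⟩
                    intro h
                    rw [vb c] at h
                    omega
                  · have hcE : c ≠ i ∧ c ≠ p ∧ c ≠ a ∧ c ≠ b := ⟨hci, hcp, hca, hcb⟩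
                    have hdE : d ≠ i ∧ d ≠ p ∧ d ≠ a ∧ d ≠ b := ⟨hdi, hdp, hda, hdb⟩
                    rw [Fev c d c d (so c hcE.1 hcE.2.1) (so d hdE.1 hdE.2.1) (by omega), memD',
                      e5 c hcE.1 hcE.2.1 hcE.2.2.1 hcE.2.2.2,
                      e5 d hdE.1 hdE.2.1 hdE.2.2.1 hdE.2.2.2]
                    exact ⟨h1, h2, h3⟩
  -- the two extra pairs
  have hip' : (i, p) ∈ D' := by
    rw [memD', e1, e2]; exact ⟨hip, by omega, by omega⟩
  have hab' : (a, b) ∈ D' := by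
    rw [memD', e3, e4]; exact ⟨hab, by omega, by omega⟩
  have PhiP : ∀ t, F t ∈ D' → Phi t = F t := by
    intro t h; simp only [hPhi]; rw [if_pos h]
  have hFip : F (i, p) = (i, p) := Fev' i p p i si sp hip
  have hFab : F (a, b) = (a, b) :=
    Fev a b a b (so a (by omega) (by omega)) (so b (by omega) (by omega)) hab
  have hFinv : ∀ c d : ℤ, c < d → F (F (c, d)) = (c, d) := by
    intro c d h
    show sortPair s (sortPair s (c, d)) = (c, d)
    exact sortPair_invol s sinv (c, d) h
  -- image and injectivity data for exceptional pairs
  have keyN : ∀ c d : ℤ, (c, d) ∈ D → F (c, d) ∉ D' →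
      (Phi (c, d) ∈ D' ∧ F (Phi (c, d)) ∉ D) ∧
      ((Phi (c, d) = (c, d) ∧ c = i ∧ i < d ∧ d < p) ∨
       (Phi (c, d) = (c, d) ∧ d = p ∧ i < c ∧ c < p) ∨
       (Phi (c, d) = (c, b) ∧ d = a ∧ c < a ∧ c ≠ i) ∨
       (Phi (c, d) = (a, d) ∧ c = b ∧ b < d)) := by
    intro c d ht hnP
    have hPhiN : Phi (c, d) =
        (if c = i then (c, d) else if d = p then (c, d) else if d = a then (c, b) else (a, d)) := by
      simp only [hPhi]
      rw [if_neg hnP]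
    rcases charA c d ht hnP with ⟨hc, h1, h2, h3⟩ | ⟨hd, h1, h2, h3⟩ |
      ⟨hd, h1, h2, h2', h3, h4⟩ | ⟨hc, h1, h2, h3⟩
    · have hPv : Phi (c, d) = (c, d) := by rw [hPhiN, if_pos hc]
      refine ⟨⟨?_, ?_⟩, Or.inl ⟨hPv, hc, h1, h2⟩⟩
      · rw [hPv, memD', hc, e1, e5 d (by omega) (by omega) (by omega) (by omega)]
        exact ⟨by omega, by omega, by omega⟩
      · rw [hPv, hc, Fev' i d p d si (so d (by omega) (by omega)) h2, memD]
        rintro ⟨-, hh, -⟩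
        rw [hxp] at hh
        omega
    · have hcni : c ≠ i := by omega
      have hPv : Phi (c, d) = (c, d) := by rw [hPhiN, if_neg hcni, if_pos hd]
      refine ⟨⟨?_, ?_⟩, Or.inr (Or.inl ⟨hPv, hd, h1, h2⟩)⟩
      · rw [hPv, memD', hd, e2, e5 c (by omega) (by omega) (by omega) (by omega)]
        exact ⟨by omega, by omega, by omega⟩
      · rw [hPv, hd, Fev' c p c i (so c (by omega) (by omega)) sp h1, memD]
        rintro ⟨-, hh, -⟩
        rw [hxi] at hh
        omega
    · have hdnp : d ≠ p := by omega
      have hPv : Phi (c, d) = (c, b) := by rw [hPhiN, if_neg h2, if_neg hdnp, if_pos hd]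
      refine ⟨⟨?_, ?_⟩, Or.inr (Or.inr (Or.inl ⟨hPv, hd, h1, h2⟩))⟩
      · rw [hPv, memD', e4, e5 c h2 h2' (by omega) (by omega)]
        exact ⟨by omega, by omega, by omega⟩
      · rw [hPv, Fev c b c b (so c h2 h2') (so b (by omega) (by omega)) (by omega), memD]
        rintro ⟨-, hh, -⟩
        rw [hxb] at hh
        omega
    · have hcni : c ≠ i := by omega
      have hdnp : d ≠ p := by omega
      have hdna : d ≠ a := by omega
      have hPv : Phi (c, d) = (a, d) := by rw [hPhiN, if_neg hcni, if_neg hdnp, if_neg hdna]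
      refine ⟨⟨?_, ?_⟩, Or.inr (Or.inr (Or.inr ⟨hPv, hc, h1⟩))⟩
      · rw [hPv, memD', e3, e5 d (by omega) (by omega) (by omega) (by omega)]
        exact ⟨by omega, by omega, by omega⟩
      · rw [hPv, Fev a d a d (so a (by omega) (by omega)) (so d (by omega) (by omega)) (by omega),
          memD]
        rintro ⟨-, hh, -⟩
        rw [hxa] at hh
        omega
  -- Phi maps D into D' avoiding the two extra pairs
  have hkey : ∀ t ∈ D, Phi t ∈ D' ∧ Phi t ≠ (i, p) ∧ Phi t ≠ (a, b) := by
    rintro ⟨c, d⟩ ht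
    have hcd : c < d := ((memD c d).mp ht).1
    by_cases hP : F (c, d) ∈ D'
    · rw [PhiP _ hP]
      refine ⟨hP, ?_, ?_⟩
      · intro h
        have h2 := hFinv c d hcd
        rw [h, hFip] at h2
        rw [← h2, memD, hxi, hxp] at ht
        omega
      · intro h
        have h2 := hFinv c d hcd
        rw [h, hFab] at h2
        rw [← h2, memD, hxa, hxb] at ht
        omega
    · obtain ⟨⟨hmem, -⟩, hshape⟩ := keyN c d ht hP
      refine ⟨hmem, ?_, ?_⟩ <;>
      · rcases hshape with ⟨hPv, hsh⟩ | ⟨hPv, hsh⟩ | ⟨hPv, hsh⟩ | ⟨hPv, hsh⟩ <;>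
          rw [hPv] <;> rw [Ne, Prod.mk.injEq] <;> omega
  have hinj : Set.InjOn Phi D := by
    rintro ⟨c, d⟩ ht ⟨c', d'⟩ hu heq
    have hcd : c < d := ((memD c d).mp ht).1
    have hcd' : c' < d' := ((memD c' d').mp hu).1
    by_cases hP : F (c, d) ∈ D' <;> by_cases hQ : F (c', d') ∈ D'
    · rw [PhiP _ hP, PhiP _ hQ] at heq
      have h2 := hFinv c d hcd
      rw [heq, hFinv c' d' hcd'] at h2
      exact h2.symm
    · exfalso
      obtain ⟨⟨-, hFout⟩, -⟩ := keyN c' d' hu hQ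
      rw [PhiP _ hP] at heq
      rw [← heq, hFinv c d hcd] at hFout
      exact hFout ht
    · exfalso
      obtain ⟨⟨-, hFout⟩, -⟩ := keyN c d ht hP
      rw [PhiP _ hQ] at heq
      rw [heq, hFinv c' d' hcd'] at hFout
      exact hFout hu
    · obtain ⟨-, hshape⟩ := keyN c d ht hP
      obtain ⟨-, hshape'⟩ := keyN c' d' hu hQ
      rw [Prod.mk.injEq]
      rcases hshape with ⟨hPv, hsh⟩ | ⟨hPv, hsh⟩ | ⟨hPv, hsh⟩ | ⟨hPv, hsh⟩ <;>
        rcases hshape' with ⟨hPv', hsh'⟩ | ⟨hPv', hsh'⟩ | ⟨hPv', hsh'⟩ | ⟨hPv', hsh'⟩ <;>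
        rw [hPv, hPv', Prod.mk.injEq] at heq <;> omega
  -- counting
  have hpairne : ((i, p) : ℤ × ℤ) ≠ (a, b) := by
    rw [Ne, Prod.mk.injEq]; omega
  have hpair_sub : ({(i, p), (a, b)} : Set (ℤ × ℤ)) ⊆ D' := by
    rintro t (rfl | ht)
    · exact hip'
    · rw [Set.mem_singleton_iff] at ht; subst ht; exact hab'
  have hpair_card : ({(i, p), (a, b)} : Set (ℤ × ℤ)).ncard = 2 := Set.ncard_pair hpairne
  have himg : Phi '' D ⊆ D' \ {(i, p), (a, b)} := by
    rintro t' ⟨t, ht, rfl⟩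
    obtain ⟨h1, h2, h3⟩ := hkey t ht
    refine ⟨h1, ?_⟩
    rintro (h | h)
    · exact h2 h
    · rw [Set.mem_singleton_iff] at h; exact h3 h
  have hc1 : D.ncard = (Phi '' D).ncard := (Set.ncard_image_of_injOn hinj).symm
  have hc2 : (Phi '' D).ncard ≤ (D' \ {(i, p), (a, b)}).ncard :=
    Set.ncard_le_ncard himg (hD'fin.diff)
  have hc3 : (D' \ {(i, p), (a, b)}).ncard = D'.ncard - 2 := by
    rw [Set.ncard_diff hpair_sub, hpair_card]
  have hc4 : 2 ≤ D'.ncard := by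
    rw [← hpair_card]
    exact Set.ncard_le_ncard hpair_sub hD'fin
  omega

end LemA
section Core
open Equiv

/-- The key combinatorial fact: conjugating `η(z)` by `(i,p)` with `i < p = z(r)`
and `z(i) < q` produces an involution all of whose visible inversions are
lexicographically below `(q,r)` (with strict second coordinate). -/
lemma core_strong {z v : Perm ℤ} (hz : z ∈ FZ) {q r p i k : ℤ}
    (hqr : IsMaxVisInv z q r) (hp : z r = p) (hk : z i = k)
    (hi : i < p) (hkq : k < q)
    (hv : v = Equiv.swap i p * (Equiv.swap q r * z * Equiv.swap q r) * Equiv.swap i p) :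
    ∀ a b : ℤ, FpfVisInv v a b → a < q ∨ (a = q ∧ b < r) := by
  obtain ⟨⟨hqr1, hqr2⟩, hmax⟩ := hqr
  rw [lt_min_iff, hp] at hqr2
  obtain ⟨hpq, hpw⟩ := hqr2
  -- w := z q
  set w : ℤ := z q with hw
  -- basic distinctness facts
  have hzz : ∀ m, z (z m) = m := FZ_invol hz
  have hzp : z p = r := by rw [← hp, hzz]
  have hzk : z k = i := by rw [← hk, hzz]
  have hzw : z w = q := by rw [hw, hzz]
  have hinj : ∀ m n : ℤ, z m = z n → m = n := fun m n h => z.injective h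
  have hwq : w ≠ q := fun h => FZ_fpf hz q h
  have hwr : w ≠ r := fun h => by rw [h, hp] at hzw; omega
  have hki : k ≠ i := fun h => FZ_fpf hz i (hk.trans h)
  have hkp : k ≠ p := fun h => by rw [← hzk, h, hzp] at hi; omega
  have hkr : k ≠ r := by omega
  have hkw : k ≠ w := fun h => by
    have := hinj i q (by rw [hk, h])
    omega
  have hwi : w ≠ i := by omega
  have hwp : w ≠ p := fun h => by
    have := hinj q r (by rw [← hw, hp]; exact h)
    omega
  have hik : i ≠ k := fun h => hki h.symm
  -- swap evaluation helpers
  have s1q : Equiv.swap q r q = r := Equiv.swap_apply_left q r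
  have s1r : Equiv.swap q r r = q := Equiv.swap_apply_right q r
  have s1o : ∀ m, m ≠ q → m ≠ r → Equiv.swap q r m = m :=
    fun m h1 h2 => Equiv.swap_apply_of_ne_of_ne h1 h2
  have s2i : Equiv.swap i p i = p := Equiv.swap_apply_left i p
  have s2p : Equiv.swap i p p = i := Equiv.swap_apply_right i p
  have s2o : ∀ m, m ≠ i → m ≠ p → Equiv.swap i p m = m :=
    fun m h1 h2 => Equiv.swap_apply_of_ne_of_ne h1 h2
  set y : Perm ℤ := Equiv.swap q r * z * Equiv.swap q r with hy
  have yev : ∀ m, y m = Equiv.swap q r (z (Equiv.swap q r m)) := fun m => rfl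
  have vev : ∀ m, v m = Equiv.swap i p (y (Equiv.swap i p m)) := fun m => by
    rw [hv]; rfl
  -- point evaluations of y
  have yq : y q = p := by rw [yev, s1q, hp, s1o p (by omega) (by omega)]
  have yr : y r = w := by rw [yev, s1r, ← hw, s1o w hwq hwr]
  have yp : y p = q := by rw [yev, s1o p (by omega) (by omega), hzp, s1r]
  have yw : y w = r := by rw [yev, s1o w hwq hwr, hzw, s1q]
  have yo : ∀ m, m ≠ q → m ≠ r → m ≠ p → m ≠ w → y m = z m := by
    intro m h1 h2 h3 h4
    rw [yev, s1o m h1 h2, s1o (z m)]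
    · intro h; exact h4 (hinj m w (by rw [h, hzw]))
    · intro h; exact h3 (hinj m p (by rw [h, hzp]))
  -- point evaluations of v
  have vi : v i = q := by rw [vev, s2i, yp, s2o q (by omega) (by omega)]
  have vq : v q = i := by rw [vev, s2o q (by omega) (by omega), yq, s2p]
  have vp : v p = k := by
    rw [vev, s2p, yo i (by omega) (by omega) (by omega) hwi.symm, hk, s2o k hki hkp]
  have vk : v k = p := by
    rw [vev, s2o k hki hkp, yo k (by omega) hkr hkp (by omega), hzk, s2i]
  have vr : v r = w := by rw [vev, s2o r (by omega) (by omega), yr, s2o w hwi hwp]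
  have vw : v w = r := by rw [vev, s2o w hwi hwp, yw, s2o r (by omega) (by omega)]
  have vo : ∀ m, m ≠ i → m ≠ k → m ≠ p → m ≠ q → m ≠ r → m ≠ w → v m = z m := by
    intro m h1 h2 h3 h4 h5 h6
    rw [vev, s2o m h1 h3, yo m h4 h5 h3 h6, s2o (z m)]
    · intro h; exact h2 (hinj m k (by rw [h, hzk]))
    · intro h; exact h5 (hinj m r (by rw [h, ← hp]))
  -- maximality, unpacked
  have hmax' : ∀ a b : ℤ, a < b → z b < a → z b < z a → a < q ∨ (a = q ∧ b ≤ r) := by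
    intro a b h1 h2 h3
    exact hmax a b ⟨h1, lt_min_iff.mpr ⟨h2, h3⟩⟩
  -- main case analysis
  intro a b hab
  obtain ⟨hab1, hab2⟩ := hab
  rw [lt_min_iff] at hab2
  obtain ⟨hvb1, hvb2⟩ := hab2
  by_contra hcon
  push_neg at hcon
  obtain ⟨hqa, hbr⟩ := hcon
  rcases eq_or_lt_of_le hqa with haq | haq
  · -- a = q
    have hva : v a = i := by rw [← haq, vq]
    rw [hva] at hvb2
    have hbr' : r ≤ b := hbr haq.symm
    have hbner : b ≠ r := by
      intro h
      rw [h, vr] at hvb2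
      omega
    have hbnw : b ≠ w := by
      intro h
      rw [h, vw] at hvb2
      omega
    have hvbz : v b = z b := by
      apply vo b (by omega) (by omega) (by omega) (by omega) hbner hbnw
    rw [hvbz] at hvb1 hvb2
    have := hmax' q b (by omega) (by omega) (by rw [← hw]; omega)
    omega
  · -- q < a
    have hanb : a ∉ ({i, k, p, q} : Set ℤ) := by
      simp only [Set.mem_insert_iff, Set.mem_singleton_iff]
      push_neg
      omega
    by_cases hbr2 : b = r
    · -- b = r
      rw [hbr2, vr] at hvb1 hvb2
      by_cases haw : a = w
      · rw [haw, vw] at hvb2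
        omega
      · have hva : v a = z a := by
          apply vo a (by omega) (by omega) (by omega) (by omega) (by omega) haw
        rw [hva] at hvb2
        have := hmax' a r (by omega) (by rw [hp]; omega) (by rw [hp]; omega)
        omega
    · by_cases hbw : b = w
      · -- b = w
        rw [hbw, vw] at hvb1 hvb2
        have hanr : a ≠ r := by
          intro h; rw [h, vr] at hvb2; omega
        have hva : v a = z a := by
          apply vo a (by omega) (by omega) (by omega) (by omega) hanr (by omega)
        rw [hva] at hvb2
        have := hmax' a w (by omega) (by rw [hzw]; omega) (by rw [hzw]; omega)
        omega
      · -- b ∉ {r, w}; b > a > q so b not special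
        have hvbz : v b = z b := by
          apply vo b (by omega) (by omega) (by omega) (by omega) hbr2 hbw
        rw [hvbz] at hvb1 hvb2
        by_cases har : a = r
        · -- a = r
          rw [har, vr] at hvb2
          by_cases hzbq : z b < q
          · have := hmax' q b (by omega) (by omega) (by rw [← hw]; omega)
            omega
          · -- c := z b with q < c < r
            have hzbnq : z b ≠ q := by
              intro h
              exact hbw (hinj b w (by rw [h, hzw]))
            have hc1 : q < z b := by omega
            have hc2 : z b < r := by omega
            have := hmax' (z b) r hc2 (by rw [hp]; omega) (by rw [hp, hzz]; omega)
            omega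
        · by_cases haw : a = w
          · -- a = w
            rw [haw, vw] at hvb2
            rw [haw] at hab1
            by_cases hzbq : z b < q
            · have := hmax' w b (by omega) (by omega) (by rw [hzw]; omega)
              omega
            · have hzbnq : z b ≠ q := by
                intro h
                exact hbw (hinj b w (by rw [h, hzw]))
              have hc1 : q < z b := by omega
              have hc2 : z b < r := by omega
              have := hmax' (z b) r hc2 (by rw [hp]; omega) (by rw [hp, hzz]; omega)
              omega
          · -- a generic
            have hva : v a = z a := by
              apply vo a (by omega) (by omega) (by omega) (by omega) har haw
            rw [hva] at hvb2
            have := hmax' a b hab1 hvb1 hvb2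
            omega

end Core
section Structural
open Equiv

lemma maxVisInv_unique {z : Perm ℤ} {q r q' r' : ℤ}
    (h : IsMaxVisInv z q r) (h' : IsMaxVisInv z q' r') : q' = q ∧ r' = r := by
  have h1 := h.2 q' r' h'.1
  have h2 := h'.2 q r h.1
  omega

lemma max_descent {z : Perm ℤ} {q r : ℤ} (hz : z ∈ FZ) (h : IsMaxVisInv z q r) :
    IsGreatest {i : ℤ | FpfVisDes z i} q := by
  obtain ⟨⟨hqr, hvr⟩, hmax⟩ := h
  rw [lt_min_iff] at hvr
  constructor
  · show FpfVisInv z q (q + 1)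
    by_cases hr : r = q + 1
    · rw [← hr]
      exact ⟨by omega, by rw [lt_min_iff]; exact hvr⟩
    · have hq1r : q + 1 < r := by omega
      have hne : z (q + 1) ≠ z r := fun hc => by
        have := z.injective hc; omega
      have key : z (q + 1) < z r := by
        by_contra hge
        push_neg at hge
        have hinv : FpfVisInv z (q + 1) r :=
          ⟨hq1r, by rw [lt_min_iff]; constructor <;> omega⟩
        have := hmax _ _ hinv
        omega
      exact ⟨by omega, by rw [lt_min_iff]; constructor <;> omega⟩
  · intro d hd
    have := hmax d (d + 1) hd
    omega

lemma etaFPF_eq {z : Perm ℤ} {q r : ℤ} (h : IsMaxVisInv z q r) :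
    etaFPF z = Equiv.swap q r * z * Equiv.swap q r := by
  rw [etaFPF]
  have hex : ∃ t : ℤ × ℤ, IsMaxVisInv z t.1 t.2 := ⟨(q, r), h⟩
  rw [dif_pos hex]
  obtain ⟨h1, h2⟩ := maxVisInv_unique h hex.choose_spec
  rw [h1, h2]

lemma maxDes_eq {z : Perm ℤ} {q r : ℤ} (hz : z ∈ FZ) (h : IsMaxVisInv z q r) :
    maxFpfVisDes z = q := by
  rw [maxFpfVisDes]
  have hex : ∃ d : ℤ, IsGreatest {i : ℤ | FpfVisDes z i} d := ⟨q, max_descent hz h⟩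
  rw [dif_pos hex]
  exact IsGreatest.unique hex.choose_spec (max_descent hz h)

lemma etaFPF_apply {z : Perm ℤ} {q r : ℤ} (hz : z ∈ FZ) (h : IsMaxVisInv z q r) :
    etaFPF z (maxFpfVisDes z) = z r := by
  rw [maxDes_eq hz h, etaFPF_eq h]
  have hvr := h.1.2
  rw [lt_min_iff] at hvr
  have hqr := h.1.1
  simp only [Perm.mul_apply, Equiv.swap_apply_left]
  exact Equiv.swap_apply_of_ne_of_ne (by omega) (by omega)

/-- An element of `FZ` without visible inversions equals `Θ`. -/
lemma eq_theta_of_no_visInv {z : Perm ℤ} (hz : z ∈ FZ)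
    (h : ∀ a b : ℤ, ¬ FpfVisInv z a b) : z = Theta := by
  have hzz := FZ_invol hz
  have aux : ∀ c, c < z c → z c = c + 1 := by
    intro c hc
    by_contra hne
    have hc2 : c + 1 < z c := by omega
    have h1 : z (c + 1) ≠ c := fun hc1 => by
      have h2 := congrArg z hc1
      rw [hzz] at h2
      omega
    have h1' : z (c + 1) ≠ c + 1 := FZ_fpf hz (c + 1)
    rcases lt_or_gt_of_ne h1 with hlt | hgt
    · exact h c (c + 1) ⟨by omega, by rw [lt_min_iff]; constructor <;> omega⟩
    · exact h (c + 1) (z c) ⟨by omega, by rw [lt_min_iff, hzz]; constructor <;> omega⟩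
  have adj : ∀ c, z c = c - 1 ∨ z c = c + 1 := by
    intro c
    rcases lt_or_gt_of_ne (FZ_fpf hz c) with hlt | hgt
    · left
      have : z (z c) = z c + 1 := aux (z c) (by rw [hzz]; omega)
      rw [hzz] at this
      omega
    · right; exact aux c (by omega)
  ext m
  by_contra hne
  have hSfin := hz.2.2
  have hSfne : hSfin.toFinset.Nonempty := ⟨m, by rw [Set.Finite.mem_toFinset]; exact hne⟩
  obtain ⟨M, hMS, hMax0⟩ : ∃ M : ℤ, (z M ≠ Theta M) ∧ ∀ n, z n ≠ Theta n → n ≤ M := by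
    refine ⟨hSfin.toFinset.max' hSfne, ?_, ?_⟩
    · have h0 := hSfin.toFinset.max'_mem hSfne
      rwa [Set.Finite.mem_toFinset] at h0
    · intro n hn
      exact hSfin.toFinset.le_max' n (by rwa [Set.Finite.mem_toFinset])
  have hMax : ∀ n, M < n → z n = Theta n := by
    intro n hn
    by_contra hne2
    have := hMax0 n hne2
    omega
  by_cases hev : Even M
  · have hth : Theta M = M - 1 := by
      show thetaFun M = M - 1
      unfold thetaFun
      rw [if_pos hev]
    have hzM : z M = M + 1 := by
      rcases adj M with h' | h'
      · exact absurd (h'.trans hth.symm) hMS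
      · exact h'
    have h2 : z (M + 1) = M := by rw [← hzM, hzz]
    have h3 : z (M + 1) = Theta (M + 1) := hMax (M + 1) (by omega)
    have h4 : Theta (M + 1) = M + 2 := by
      show thetaFun (M + 1) = M + 2
      unfold thetaFun
      rw [if_neg (by rw [Int.even_add_one]; exact not_not_intro hev)]
      ring
    omega
  · have hth : Theta M = M + 1 := by
      show thetaFun M = M + 1
      unfold thetaFun
      rw [if_neg hev]
    have hzM : z M = M - 1 := by
      rcases adj M with h' | h'
      · exact h'
      · exact absurd (h'.trans hth.symm) hMS
    have h2 : z (M - 1) = M := by rw [← hzM, hzz]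
    have h3 : z (M + 1) = Theta (M + 1) := hMax (M + 1) (by omega)
    have h4 : Theta (M + 1) = M := by
      show thetaFun (M + 1) = M
      unfold thetaFun
      rw [if_pos (by rw [Int.even_add_one]; exact hev)]
      ring
    have : M - 1 = M + 1 := z.injective (by rw [h2, h3, h4])
    omega

lemma theta_fpfGrass : IsFPFGrass Theta := by
  left
  funext m
  rw [Imap]
  have hcond : ¬ ∃ a b : ℤ, a < b ∧ Theta a = b ∧ min m (Theta m) < b ∧ b < max m (Theta m) := by
    rintro ⟨a, b, h1, h2, h3, h4⟩
    have hta : Theta a = thetaFun a := rfl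
    have htm : Theta m = thetaFun m := rfl
    have h5 := theta_pm a
    have h6 := theta_pm m
    rw [hta] at h2
    rw [htm] at h3 h4
    rw [min_lt_iff] at h3
    rw [lt_max_iff] at h4
    omega
  rw [if_neg hcond]
  rfl

end Structural
section Step
open Equiv

lemma step_strong {w u : Perm ℤ} (hw : w ∈ FZ) {q' r' : ℤ} (hqr' : IsMaxVisInv w q' r')
    (hu : u ∈ That1 w) : ∀ a b : ℤ, FpfVisInv u a b → a < q' ∨ (a = q' ∧ b < r') := by
  rw [That1] at hu
  by_cases hg : IsFPFGrass w
  · rw [if_pos hg] at hu; exact absurd hu (Set.notMem_empty u)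
  rw [if_neg hg] at hu
  obtain ⟨huFZ, hlen, i, hip, hueq⟩ := hu
  rw [etaFPF_apply hw hqr'] at hip hueq
  rw [etaFPF_eq hqr'] at hlen hueq
  have hq'r' : q' < r' := hqr'.1.1
  have hvr := hqr'.1.2
  rw [lt_min_iff] at hvr
  obtain ⟨hpq', hpw⟩ := hvr
  have hkne_q : w i ≠ q' := by
    intro h
    have h2 : i = w q' := by rw [← h, FZ_invol hw]
    omega
  have hkq : w i < q' := by
    by_contra hge
    push_neg at hge
    have hgt : q' < w i := by omega
    set y : Perm ℤ := Equiv.swap q' r' * w * Equiv.swap q' r' with hy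
    have hwp : w (w r') = r' := FZ_invol hw r'
    have hkr' : w i ≠ r' := fun h => by
      have h2 : i = w r' := by rw [← h, FZ_invol hw]
      omega
    have hki : w i ≠ i := FZ_fpf hw i
    have hkp : w i ≠ w r' := fun h => by
      have := w.injective h
      omega
    have huev : ∀ m, u m = Equiv.swap i (w r') (y (Equiv.swap i (w r') m)) := fun m => by
      rw [hueq]; rfl
    have s1o : ∀ m, m ≠ q' → m ≠ r' → Equiv.swap q' r' m = m :=
      fun m h1 h2 => Equiv.swap_apply_of_ne_of_ne h1 h2
    have s2o : ∀ m, m ≠ i → m ≠ w r' → Equiv.swap i (w r') m = m :=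
      fun m h1 h2 => Equiv.swap_apply_of_ne_of_ne h1 h2
    have yp : y (w r') = q' := by
      show Equiv.swap q' r' (w (Equiv.swap q' r' (w r'))) = q'
      rw [s1o (w r') (by omega) (by omega), hwp, Equiv.swap_apply_right]
    have yi : y i = w i := by
      show Equiv.swap q' r' (w (Equiv.swap q' r' i)) = w i
      rw [s1o i (by omega) (by omega), s1o (w i) hkne_q hkr']
    have hui : u i = q' := by
      rw [huev, Equiv.swap_apply_left, yp, s2o q' (by omega) (by omega)]
    have hup : u (w r') = w i := by
      rw [huev, Equiv.swap_apply_right, yi, s2o (w i) hki hkp]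
    have hcount := lemA huFZ hip hpq' hgt hui hup
    have hswap2 : Equiv.swap i (w r') * u * Equiv.swap i (w r') = y := by
      rw [hueq, ← mul_assoc, ← mul_assoc, Equiv.swap_mul_self, one_mul, mul_assoc,
        Equiv.swap_mul_self, mul_one]
    rw [hswap2] at hcount
    have hyFZ : y ∈ FZ := FZ_conj_mem hw q' r'
    obtain ⟨m1, hm1⟩ := D_even huFZ
    obtain ⟨m2, hm2⟩ := D_even hyFZ
    have hlen' : (InvSet u \ CycSet u).ncard / 2 = (InvSet y \ CycSet y).ncard / 2 + 1 := hlen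
    omega
  exact core_strong hw hqr' rfl rfl hip hkq hueq

lemma that_bound {z : Perm ℤ} (hz : z ∈ FZ) {q r : ℤ} (hqr : IsMaxVisInv z q r) :
    ∀ n : ℕ, ∀ u ∈ That n z, u ∈ FZ ∧
      ∀ a b : ℤ, FpfVisInv u a b → a < q ∨ (a = q ∧ b ≤ r - n) := by
  intro n
  induction n with
  | zero =>
    intro u hu
    have hu' : u = z := by simpa [That] using hu
    subst hu'
    refine ⟨hz, fun a b h => ?_⟩
    have := hqr.2 a b h
    push_cast
    omega
  | succ n ih =>
    intro u hu
    have hu' : ∃ w ∈ That n z, u ∈ That1 w := by simpa [That] using hu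
    obtain ⟨w, hwmem, hu1⟩ := hu'
    obtain ⟨hwFZ, hwb⟩ := ih w hwmem
    have hng : ¬ IsFPFGrass w := by
      intro hg
      rw [That1, if_pos hg] at hu1
      exact absurd hu1 (Set.notMem_empty u)
    have huFZ : u ∈ FZ := by
      rw [That1, if_neg hng] at hu1
      exact hu1.1
    refine ⟨huFZ, ?_⟩
    by_cases hvis : ∃ a b : ℤ, FpfVisInv w a b
    · obtain ⟨a0, b0, h0⟩ := hvis
      obtain ⟨Q, R, hQR⟩ := exists_maxVisInv hwFZ h0
      have hQb := hwb Q R hQR.1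
      have hstep := step_strong hwFZ hQR hu1
      intro a b hab
      have h2 := hstep a b hab
      push_cast at hQb ⊢
      omega
    · exfalso
      push_neg at hvis
      exact hng (by rw [eq_theta_of_no_visInv hwFZ hvis]; exact theta_fpfGrass)

end Step

/-- let `z ∈ F_ℤ`, `v ∈ T̂₁(z)`, let `(q,r)` be the lexicographically
maximal FPF-visible inversion of `z`, and let `(q₁,r₁)` be any FPF-visible inversion of
`v`. Then `q₁ < q` or `r₁ < r`; consequently, for `n ≥ r - q` every FPF-visible descent of
every element of `T̂_n(z)` is strictly less than `q`. -/
theorem that_visInv_decreases (z : Equiv.Perm ℤ) (hz : z ∈ FZ)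
    (v : Equiv.Perm ℤ) (hv : v ∈ That1 z)
    (q r : ℤ) (hqr : IsMaxVisInv z q r)
    (q₁ r₁ : ℤ) (h1 : FpfVisInv v q₁ r₁) :
    (q₁ < q ∨ r₁ < r) ∧
    (∀ n : ℕ, r - q ≤ (n : ℤ) → ∀ u ∈ That n z, ∀ d : ℤ, FpfVisDes u d → d < q) := by
  constructor
  · have h2 := step_strong hz hqr hv q₁ r₁ h1
    omega
  · intro n hn u hu d hd
    obtain ⟨huFZ, hb⟩ := that_bound hz hqr n u hu
    have h2 := hb d (d + 1) hd
    have hq := hqr.1.1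
    omega
end
end

section
/- Let z ∈ F_∞ and let v, w ∈ A_FPF(z) with v <_A w. Then λ(v) < λ(w) strictly in the dominance order on partitions. -/
open Equiv

noncomputable section

/-- `S_∞`: permutations of `ℤ` whose support is a finite set of positive integers. -/
def SInf : Set (Equiv.Perm ℤ) := {w | {i : ℤ | w i ≠ i}.Finite ∧ ∀ i : ℤ, w i ≠ i → 0 < i}

/-- The Coxeter length of `w ∈ S_∞`: the number of inversions. -/
def lenZ (w : Equiv.Perm ℤ) : ℕ := (InvSet w).ncard

/-- `F_∞`: the elements of `F_ℤ` agreeing with `Θ` on all `i ≤ 0`. -/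
def FInf : Set (Equiv.Perm ℤ) := {z | z ∈ FZ ∧ ∀ i : ℤ, i ≤ 0 → z i = Theta i}

/-- `A_FPF(z)`: the elements `w ∈ S_∞` of minimal Coxeter length with `z = w⁻¹ Θ w`. -/
def AFPF (z : Equiv.Perm ℤ) : Set (Equiv.Perm ℤ) :=
  {w | w ∈ SInf ∧ z = w⁻¹ * Theta * w ∧
    ∀ v ∈ SInf, z = v⁻¹ * Theta * v → lenZ w ≤ lenZ v}

/-- `w = β_min(z)`: `w ∈ A_FPF(z)` and the one-line sequence `(w(1), w(2), …)` of `w`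
is lexicographically minimal among elements of `A_FPF(z)`. -/
def IsLexMinAtom (z w : Equiv.Perm ℤ) : Prop :=
  w ∈ AFPF z ∧ ∀ v ∈ AFPF z, v = w ∨
    ∃ k : ℤ, 0 < k ∧ w k < v k ∧ ∀ j : ℤ, 0 < j → j < k → w j = v j

/-- `s_i = (i, i+1)` as a permutation of `ℤ`. -/
def sZ (i : ℤ) : Equiv.Perm ℤ := Equiv.swap i (i + 1)

/-- The covering relation generating `<_A`: `v ≺ w` when there is an odd positive integer
`i` with `ℓ(s_i v) > ℓ(v) > ℓ(s_{i+1} v) > ℓ(s_{i+2} s_{i+1} v)`,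
`s_{i+2} s_{i+1} v = s_i s_{i+1} w`, and `ℓ(s_i s_{i+1} w) < ℓ(s_{i+1} w) < ℓ(w) < ℓ(s_i w)`. -/
def AtomRel (v w : Equiv.Perm ℤ) : Prop :=
  ∃ i : ℤ, 0 < i ∧ Odd i ∧
    lenZ v < lenZ (sZ i * v) ∧
    lenZ (sZ (i + 1) * v) < lenZ v ∧
    lenZ (sZ (i + 2) * (sZ (i + 1) * v)) < lenZ (sZ (i + 1) * v) ∧
    sZ (i + 2) * (sZ (i + 1) * v) = sZ i * (sZ (i + 1) * w) ∧
    lenZ (sZ i * (sZ (i + 1) * w)) < lenZ (sZ (i + 1) * w) ∧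
    lenZ (sZ (i + 1) * w) < lenZ w ∧
    lenZ w < lenZ (sZ i * w)

/-- The `i`-th entry of the code of `w`: `c_i = #{j > i : w(j) < w(i)}`. -/
def codeZ (w : Equiv.Perm ℤ) (i : ℤ) : ℕ := {j : ℤ | i < j ∧ w j < w i}.ncard

/-- The sum `λ(w)₁ + ⋯ + λ(w)_k` of the `k` largest parts of the shape `λ(w)` of `w`
(the partition sorting the code of `w`): the largest sum of `k` code entries at distinct
positive positions. -/
def shapeSum (w : Equiv.Perm ℤ) (k : ℕ) : ℕ :=
  sSup {m : ℕ | ∃ S : Finset ℤ, S.card = k ∧ (∀ i ∈ S, 0 < i) ∧ m = ∑ i ∈ S, codeZ w i}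

lemma swap_lt_swap_iff (j m n : ℤ) :
    (Equiv.swap j (j+1)) m < (Equiv.swap j (j+1)) n ↔
      ((m < n ∧ ¬(m = j ∧ n = j+1)) ∨ (m = j+1 ∧ n = j)) := by
  simp only [Equiv.swap_apply_def]
  split_ifs <;> omega

lemma sZ_apply (j m : ℤ) : sZ j m = if m = j then j+1 else if m = j+1 then j else m := by
  simp [sZ, Equiv.swap_apply_def]

lemma eq_invApply_iff (u : Equiv.Perm ℤ) (x j : ℤ) : u x = j ↔ x = u⁻¹ j := by
  constructor
  · intro h; simp [← h]
  · intro h; simp [h]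

lemma inv_insert (u : Equiv.Perm ℤ) (j : ℤ) (h : u⁻¹ j < u⁻¹ (j+1)) :
    InvSet (sZ j * u) = insert (u⁻¹ j, u⁻¹ (j+1)) (InvSet u) ∧
      (u⁻¹ j, u⁻¹ (j+1)) ∉ InvSet u := by
  constructor
  · ext ⟨x, y⟩
    simp only [InvSet, Set.mem_setOf_eq, Set.mem_insert_iff, Prod.mk.injEq,
      Equiv.Perm.mul_apply, sZ]
    rw [swap_lt_swap_iff j (u y) (u x)]
    rw [eq_invApply_iff u y j, eq_invApply_iff u x (j+1), eq_invApply_iff u x j,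
      eq_invApply_iff u y (j+1)]
    constructor
    · rintro ⟨hxy, h1 | h2⟩
      · exact Or.inr ⟨hxy, h1.1⟩
      · exact Or.inl ⟨h2.2, h2.1⟩
    · rintro (⟨hx, hy⟩ | ⟨hxy, huv⟩)
      · subst hx; subst hy
        exact ⟨h, Or.inr ⟨rfl, rfl⟩⟩
      · refine ⟨hxy, Or.inl ⟨huv, ?_⟩⟩
        rintro ⟨hy, hx⟩
        subst hy; subst hx
        omega
  · simp only [InvSet, Set.mem_setOf_eq]
    intro hc
    simp at hc

lemma sZ_mul_sZ_mul (j : ℤ) (u : Equiv.Perm ℤ) : sZ j * (sZ j * u) = u := by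
  rw [← mul_assoc, sZ, Equiv.swap_mul_self, one_mul]

lemma inv_sZ_mul (u : Equiv.Perm ℤ) (j x : ℤ) : (sZ j * u)⁻¹ x = u⁻¹ (sZ j x) := by
  simp [sZ, Equiv.Perm.mul_apply, Equiv.swap_inv]

lemma sZ_self (j : ℤ) : sZ j j = j + 1 := by
  rw [sZ_apply, if_pos rfl]

lemma sZ_succ (j : ℤ) : sZ j (j+1) = j := by
  rw [sZ_apply, if_neg (by omega), if_pos rfl]

lemma inv_insert' (u : Equiv.Perm ℤ) (j : ℤ) (h : u⁻¹ (j+1) < u⁻¹ j) :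
    InvSet u = insert (u⁻¹ (j+1), u⁻¹ j) (InvSet (sZ j * u)) ∧
      (u⁻¹ (j+1), u⁻¹ j) ∉ InvSet (sZ j * u) := by
  have h2 : (sZ j * u)⁻¹ j < (sZ j * u)⁻¹ (j+1) := by
    rw [inv_sZ_mul, inv_sZ_mul, sZ_self, sZ_succ]; exact h
  have := inv_insert (sZ j * u) j h2
  rw [sZ_mul_sZ_mul, inv_sZ_mul, inv_sZ_mul, sZ_self, sZ_succ] at this
  exact this

lemma insert_finite_iff {a : ℤ × ℤ} {s : Set (ℤ × ℤ)} : (insert a s).Finite ↔ s.Finite :=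
  ⟨fun hf => hf.subset (Set.subset_insert a s), fun hf => hf.insert a⟩

lemma finite_iff_finite_sZ (u : Equiv.Perm ℤ) (j : ℤ) :
    (InvSet u).Finite ↔ (InvSet (sZ j * u)).Finite := by
  rcases lt_trichotomy (u⁻¹ j) (u⁻¹ (j+1)) with h | h | h
  · rw [(inv_insert u j h).1, insert_finite_iff]
  · exfalso; have := u⁻¹.injective h; omega
  · rw [(inv_insert' u j h).1, insert_finite_iff]

lemma lenZ_sZ_of_lt (u : Equiv.Perm ℤ) (j : ℤ) (hfin : (InvSet u).Finite)
    (h : u⁻¹ j < u⁻¹ (j+1)) : lenZ (sZ j * u) = lenZ u + 1 := by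
  obtain ⟨heq, hmem⟩ := inv_insert u j h
  rw [lenZ, heq, Set.ncard_insert_of_notMem hmem hfin]; rfl

lemma lenZ_sZ_of_gt (u : Equiv.Perm ℤ) (j : ℤ) (hfin : (InvSet (sZ j * u)).Finite)
    (h : u⁻¹ (j+1) < u⁻¹ j) : lenZ u = lenZ (sZ j * u) + 1 := by
  obtain ⟨heq, hmem⟩ := inv_insert' u j h
  rw [lenZ, heq, Set.ncard_insert_of_notMem hmem hfin]; rfl

/-- From `ℓ(u) < ℓ(s_j u)` and finiteness of `InvSet u`, the value `j` occurs before `j+1`. -/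

lemma pos_lt_of_len_lt (u : Equiv.Perm ℤ) (j : ℤ) (hfin : (InvSet u).Finite)
    (h : lenZ u < lenZ (sZ j * u)) : u⁻¹ j < u⁻¹ (j+1) := by
  rcases lt_trichotomy (u⁻¹ j) (u⁻¹ (j+1)) with h' | h' | h'
  · exact h'
  · exfalso; have := u⁻¹.injective h'; omega
  · exfalso
    have hfin' : (InvSet (sZ j * u)).Finite := (finite_iff_finite_sZ u j).mp hfin
    have := lenZ_sZ_of_gt u j hfin' h'
    omega

/-- From `ℓ(s_j u) < ℓ(u)` and finiteness, the value `j+1` occurs before `j`. -/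

lemma pos_gt_of_len_gt (u : Equiv.Perm ℤ) (j : ℤ) (hfin : (InvSet u).Finite)
    (h : lenZ (sZ j * u) < lenZ u) : u⁻¹ (j+1) < u⁻¹ j := by
  rcases lt_trichotomy (u⁻¹ j) (u⁻¹ (j+1)) with h' | h' | h'
  · exfalso; have := lenZ_sZ_of_lt u j hfin h'; omega
  · exfalso; have := u⁻¹.injective h'; omega
  · exact h'

lemma finite_of_len_lt (u : Equiv.Perm ℤ) (j : ℤ) (h : lenZ u < lenZ (sZ j * u)) :
    (InvSet u).Finite := by
  by_contra hinf
  have h1 : (InvSet u).ncard = 0 := Set.Infinite.ncard hinf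
  have h2 : (InvSet (sZ j * u)).ncard = 0 :=
    Set.Infinite.ncard (fun hf => hinf ((finite_iff_finite_sZ u j).mpr hf))
  rw [lenZ, lenZ, h1, h2] at h; omega

lemma finite_of_len_gt (u : Equiv.Perm ℤ) (j : ℤ) (h : lenZ (sZ j * u) < lenZ u) :
    (InvSet u).Finite := by
  by_contra hinf
  have h1 : (InvSet u).ncard = 0 := Set.Infinite.ncard hinf
  have h2 : (InvSet (sZ j * u)).ncard = 0 :=
    Set.Infinite.ncard (fun hf => hinf ((finite_iff_finite_sZ u j).mpr hf))
  rw [lenZ, lenZ, h1, h2] at h; omega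

lemma perm_apply_inv_self' (f : Equiv.Perm ℤ) (x : ℤ) : f (f⁻¹ x) = x :=
  f.apply_symm_apply x

lemma atom_facts {v w : Equiv.Perm ℤ} (h : AtomRel v w) :
    ∃ i : ℤ, 0 < i ∧ (InvSet v).Finite ∧ (InvSet w).Finite ∧
      v⁻¹ i < v⁻¹ (i+2) ∧ v⁻¹ (i+2) < v⁻¹ (i+3) ∧ v⁻¹ (i+3) < v⁻¹ (i+1) ∧
      (∀ x, w x = if v x = i then i+2 else if v x = i+1 then i+3
        else if v x = i+2 then i else if v x = i+3 then i+1 else v x) := by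
  obtain ⟨i, hi, _, c1, c2, c3, E, c5, c6, c7⟩ := h
  have hfv : (InvSet v).Finite := finite_of_len_lt v i c1
  have hfv1 : (InvSet (sZ (i+1) * v)).Finite := (finite_iff_finite_sZ v (i+1)).mp hfv
  -- d < b
  have hdb' := pos_gt_of_len_gt (sZ (i+1) * v) (i+2) hfv1 c3
  rw [inv_sZ_mul, inv_sZ_mul] at hdb'
  have e1 : sZ (i+1) (i+2+1) = i+3 := by rw [sZ_apply, if_neg (by omega), if_neg (by omega)]; ring
  have e2 : sZ (i+1) (i+2) = i+1 := by
    have : i+2 = (i+1)+1 := by ring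
    rw [this, sZ_succ]
  rw [e1, e2] at hdb'
  have hdb : v⁻¹ (i+3) < v⁻¹ (i+1) := hdb'
  -- w as a product of swaps times v
  have h1 : sZ i * (sZ (i + 2) * (sZ (i + 1) * v)) = sZ (i+1) * w := by
    rw [E, sZ_mul_sZ_mul]
  have hw_eq : w = sZ (i+1) * (sZ i * (sZ (i + 2) * (sZ (i + 1) * v))) := by
    rw [h1, sZ_mul_sZ_mul]
  have hfw : (InvSet w).Finite := by
    rw [hw_eq]
    exact ((finite_iff_finite_sZ _ (i+1)).mp ((finite_iff_finite_sZ _ i).mp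
      ((finite_iff_finite_sZ _ (i+2)).mp hfv1)))
  -- pointwise formula
  have hG : ∀ x, w x = if v x = i then i+2 else if v x = i+1 then i+3
      else if v x = i+2 then i else if v x = i+3 then i+1 else v x := by
    intro x
    rw [hw_eq]
    simp only [Equiv.Perm.mul_apply, sZ_apply]
    omega
  -- inverse images of w
  have hwb : w⁻¹ (i+1) = v⁻¹ (i+3) := by
    have : w (v⁻¹ (i+3)) = i+1 := by
      rw [hG, perm_apply_inv_self', if_neg (by omega), if_neg (by omega),
        if_neg (by omega), if_pos rfl]
    exact ((eq_invApply_iff w _ _).mp this).symm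
  have hwa : w⁻¹ (i+2) = v⁻¹ i := by
    have : w (v⁻¹ i) = i+2 := by
      rw [hG, perm_apply_inv_self', if_pos rfl]
    exact ((eq_invApply_iff w _ _).mp this).symm
  have hwc : w⁻¹ i = v⁻¹ (i+2) := by
    have : w (v⁻¹ (i+2)) = i := by
      rw [hG, perm_apply_inv_self', if_neg (by omega), if_neg (by omega), if_pos rfl]
    exact ((eq_invApply_iff w _ _).mp this).symm
  -- c < d from c7
  have hcd' := pos_lt_of_len_lt w i hfw c7
  rw [hwb, hwc] at hcd'
  -- a < c from c5
  have hfw1 : (InvSet (sZ (i+1) * w)).Finite := (finite_iff_finite_sZ w (i+1)).mp hfw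
  have hac' := pos_gt_of_len_gt (sZ (i+1) * w) i hfw1 c5
  rw [inv_sZ_mul, inv_sZ_mul] at hac'
  have e3 : sZ (i+1) (i+1) = i+2 := by rw [sZ_self]; ring
  have e4 : sZ (i+1) i = i := by rw [sZ_apply, if_neg (by omega), if_neg (by omega)]
  rw [e3, e4, hwa, hwc] at hac'
  exact ⟨i, hi, hfv, hfw, hac', hcd', hdb, hG⟩

lemma code_set_eq_preimage (u : Equiv.Perm ℤ) (p : ℤ) :
    {j : ℤ | p < j ∧ u j < u p} = Prod.mk p ⁻¹' InvSet u := by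
  ext j; simp [InvSet]

lemma code_set_finite (u : Equiv.Perm ℤ) (hf : (InvSet u).Finite) (p : ℤ) :
    {j : ℤ | p < j ∧ u j < u p}.Finite := by
  rw [code_set_eq_preimage]
  exact hf.preimage (Function.Injective.injOn (fun x y hxy => congrArg Prod.snd hxy))

lemma codeZ_le_lenZ (u : Equiv.Perm ℤ) (hf : (InvSet u).Finite) (p : ℤ) :
    codeZ u p ≤ lenZ u := by
  rw [codeZ, lenZ, code_set_eq_preimage]
  have h1 : Prod.mk p '' (Prod.mk p ⁻¹' InvSet u) ⊆ InvSet u := Set.image_preimage_subset _ _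
  have h2 := Set.ncard_le_ncard h1 hf
  rwa [Set.ncard_image_of_injective _ (fun x y hxy => congrArg Prod.snd hxy)] at h2

lemma shapeSet_nonempty (u : Equiv.Perm ℤ) (k : ℕ) :
    {m : ℕ | ∃ S : Finset ℤ, S.card = k ∧ (∀ i ∈ S, 0 < i) ∧ m = ∑ i ∈ S, codeZ u i}.Nonempty := by
  refine ⟨∑ i ∈ Finset.Ioc (0:ℤ) (k:ℤ), codeZ u i, Finset.Ioc (0:ℤ) (k:ℤ), ?_, ?_, rfl⟩
  · rw [Int.card_Ioc]; simp
  · intro i hi; exact (Finset.mem_Ioc.mp hi).1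

lemma shapeSet_bddAbove (u : Equiv.Perm ℤ) (hf : (InvSet u).Finite) (k : ℕ) :
    BddAbove {m : ℕ | ∃ S : Finset ℤ, S.card = k ∧ (∀ i ∈ S, 0 < i) ∧ m = ∑ i ∈ S, codeZ u i} := by
  refine ⟨k * lenZ u, ?_⟩
  rintro m ⟨S, hcard, _, rfl⟩
  calc ∑ i ∈ S, codeZ u i ≤ ∑ _i ∈ S, lenZ u :=
        Finset.sum_le_sum (fun i _ => codeZ_le_lenZ u hf i)
    _ = k * lenZ u := by rw [Finset.sum_const, hcard]; simp [Nat.smul_one_eq_cast]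

lemma shapeSum_mem (u : Equiv.Perm ℤ) (hf : (InvSet u).Finite) (k : ℕ) :
    ∃ S : Finset ℤ, S.card = k ∧ (∀ i ∈ S, 0 < i) ∧ shapeSum u k = ∑ i ∈ S, codeZ u i :=
  Nat.sSup_mem (shapeSet_nonempty u k) (shapeSet_bddAbove u hf k)

lemma le_shapeSum (u : Equiv.Perm ℤ) (hf : (InvSet u).Finite) (k : ℕ) (S : Finset ℤ)
    (hcard : S.card = k) (hpos : ∀ i ∈ S, 0 < i) : ∑ i ∈ S, codeZ u i ≤ shapeSum u k :=
  le_csSup (shapeSet_bddAbove u hf k) ⟨S, hcard, hpos, rfl⟩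

section abstractLemmas

variable {f h : ℤ → ℕ} {a c d : ℤ}

lemma sum_congr_outside (heq : ∀ p, p ≠ a → p ≠ c → p ≠ d → f p = h p) (T : Finset ℤ)
    (hT : a ∉ T) (hTc : c ∉ T) (hTd : d ∉ T) : ∑ i ∈ T, f i = ∑ i ∈ T, h i :=
  Finset.sum_congr rfl (fun p hp => heq p (fun e => hT (e ▸ hp)) (fun e => hTc (e ▸ hp))
    (fun e => hTd (e ▸ hp)))

lemma sum_le_abstract (hac : a ≠ c) (had : a ≠ d) (hcd : c ≠ d) (ha' : 0 < a)
    (hfa : h a = f a + 2) (hfc : f c = h c + 1) (hfd : f d = h d + 1)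
    (hca : h c ≤ f a) (hda : h d ≤ f a)
    (heq : ∀ p, p ≠ a → p ≠ c → p ≠ d → f p = h p)
    (S : Finset ℤ) (hpos : ∀ i ∈ S, 0 < i) :
    ∃ S' : Finset ℤ, S'.card = S.card ∧ (∀ i ∈ S', 0 < i) ∧
      ∑ i ∈ S, f i ≤ ∑ i ∈ S', h i := by
  by_cases ha : a ∈ S
  · refine ⟨S, rfl, hpos, ?_⟩
    by_cases hc : c ∈ S <;> by_cases hd : d ∈ S
    · -- a, c, d all in S
      have hc1 : c ∈ S.erase a := Finset.mem_erase.mpr ⟨(Ne.symm hac), hc⟩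
      have hd1 : d ∈ (S.erase a).erase c :=
        Finset.mem_erase.mpr ⟨(Ne.symm hcd), Finset.mem_erase.mpr ⟨Ne.symm had, hd⟩⟩
      rw [← Finset.add_sum_erase S f ha, ← Finset.add_sum_erase _ f hc1,
        ← Finset.add_sum_erase _ f hd1,
        ← Finset.add_sum_erase S h ha, ← Finset.add_sum_erase _ h hc1,
        ← Finset.add_sum_erase _ h hd1]
      have := sum_congr_outside heq (((S.erase a).erase c).erase d)
        (fun hx => (Finset.mem_erase.mp (Finset.mem_erase.mp
          (Finset.mem_erase.mp hx).2).2).1 rfl)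
        (fun hx => (Finset.mem_erase.mp (Finset.mem_erase.mp hx).2).1 rfl)
        (fun hx => (Finset.mem_erase.mp hx).1 rfl)
      omega
    · have hc1 : c ∈ S.erase a := Finset.mem_erase.mpr ⟨(Ne.symm hac), hc⟩
      rw [← Finset.add_sum_erase S f ha, ← Finset.add_sum_erase _ f hc1,
        ← Finset.add_sum_erase S h ha, ← Finset.add_sum_erase _ h hc1]
      have := sum_congr_outside heq ((S.erase a).erase c)
        (fun hx => (Finset.mem_erase.mp (Finset.mem_erase.mp hx).2).1 rfl)
        (fun hx => (Finset.mem_erase.mp hx).1 rfl)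
        (fun hx => hd (Finset.mem_of_mem_erase (Finset.mem_of_mem_erase hx)))
      omega
    · have hd1 : d ∈ S.erase a := Finset.mem_erase.mpr ⟨(Ne.symm had), hd⟩
      rw [← Finset.add_sum_erase S f ha, ← Finset.add_sum_erase _ f hd1,
        ← Finset.add_sum_erase S h ha, ← Finset.add_sum_erase _ h hd1]
      have := sum_congr_outside heq ((S.erase a).erase d)
        (fun hx => (Finset.mem_erase.mp (Finset.mem_erase.mp hx).2).1 rfl)
        (fun hx => hc (Finset.mem_of_mem_erase (Finset.mem_of_mem_erase hx)))
        (fun hx => (Finset.mem_erase.mp hx).1 rfl)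
      omega
    · rw [← Finset.add_sum_erase S f ha, ← Finset.add_sum_erase S h ha]
      have := sum_congr_outside heq (S.erase a)
        (fun hx => (Finset.mem_erase.mp hx).1 rfl)
        (fun hx => hc (Finset.mem_of_mem_erase hx))
        (fun hx => hd (Finset.mem_of_mem_erase hx))
      omega
  · by_cases hc : c ∈ S <;> by_cases hd : d ∈ S
    · -- c, d ∈ S, a ∉ S : use S' = insert a (S.erase d)
      refine ⟨insert a (S.erase d), ?_, ?_, ?_⟩
      · rw [Finset.card_insert_of_notMem (fun hx => ha (Finset.mem_of_mem_erase hx)),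
          Finset.card_erase_of_mem hd]
        have : 0 < S.card := Finset.card_pos.mpr ⟨d, hd⟩
        omega
      · intro x hx
        rcases Finset.mem_insert.mp hx with rfl | hx
        · exact ha'
        · exact hpos x (Finset.mem_of_mem_erase hx)
      · have hc1 : c ∈ S.erase d := Finset.mem_erase.mpr ⟨hcd, hc⟩
        rw [Finset.sum_insert (fun hx => ha (Finset.mem_of_mem_erase hx)),
          ← Finset.add_sum_erase S f hd, ← Finset.add_sum_erase _ f hc1,
          ← Finset.add_sum_erase _ h hc1]
        have := sum_congr_outside heq ((S.erase d).erase c)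
          (fun hx => ha (Finset.mem_of_mem_erase (Finset.mem_of_mem_erase hx)))
          (fun hx => (Finset.mem_erase.mp hx).1 rfl)
          (fun hx => (Finset.mem_erase.mp (Finset.mem_erase.mp hx).2).1 rfl)
        omega
    · -- c ∈ S only : S' = insert a (S.erase c)
      refine ⟨insert a (S.erase c), ?_, ?_, ?_⟩
      · rw [Finset.card_insert_of_notMem (fun hx => ha (Finset.mem_of_mem_erase hx)),
          Finset.card_erase_of_mem hc]
        have : 0 < S.card := Finset.card_pos.mpr ⟨c, hc⟩
        omega
      · intro x hx
        rcases Finset.mem_insert.mp hx with rfl | hx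
        · exact ha'
        · exact hpos x (Finset.mem_of_mem_erase hx)
      · rw [Finset.sum_insert (fun hx => ha (Finset.mem_of_mem_erase hx)),
          ← Finset.add_sum_erase S f hc]
        have := sum_congr_outside heq (S.erase c)
          (fun hx => ha (Finset.mem_of_mem_erase hx))
          (fun hx => (Finset.mem_erase.mp hx).1 rfl)
          (fun hx => hd (Finset.mem_of_mem_erase hx))
        omega
    · -- d ∈ S only : S' = insert a (S.erase d)
      refine ⟨insert a (S.erase d), ?_, ?_, ?_⟩
      · rw [Finset.card_insert_of_notMem (fun hx => ha (Finset.mem_of_mem_erase hx)),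
          Finset.card_erase_of_mem hd]
        have : 0 < S.card := Finset.card_pos.mpr ⟨d, hd⟩
        omega
      · intro x hx
        rcases Finset.mem_insert.mp hx with rfl | hx
        · exact ha'
        · exact hpos x (Finset.mem_of_mem_erase hx)
      · rw [Finset.sum_insert (fun hx => ha (Finset.mem_of_mem_erase hx)),
          ← Finset.add_sum_erase S f hd]
        have := sum_congr_outside heq (S.erase d)
          (fun hx => ha (Finset.mem_of_mem_erase hx))
          (fun hx => hc (Finset.mem_of_mem_erase hx))
          (fun hx => (Finset.mem_erase.mp hx).1 rfl)
        omega
    · refine ⟨S, rfl, hpos, ?_⟩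
      rw [sum_congr_outside heq S ha hc hd]

end abstractLemmas

lemma strict_abstract {f h : ℤ → ℕ} {a c d : ℤ} (hac : a ≠ c) (had : a ≠ d) (hcd : c ≠ d)
    (ha' : 0 < a)
    (hfa : h a = f a + 2) (hfc : f c = h c + 1) (hfd : f d = h d + 1)
    (hca : h c ≤ f a) (hda : h d ≤ f a)
    (heq : ∀ p, p ≠ a → p ≠ c → p ≠ d → f p = h p)
    (hKfin : {p : ℤ | 0 < p ∧ h a ≤ h p}.Finite) :
    ∃ (k : ℕ) (K : Finset ℤ), K.card = k ∧ (∀ i ∈ K, 0 < i) ∧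
      ∀ S : Finset ℤ, S.card = k → (∀ i ∈ S, 0 < i) →
        ∑ i ∈ S, f i < ∑ i ∈ K, h i := by
  set N := h a with hN
  have hN2 : 2 ≤ N := by omega
  set K := hKfin.toFinset with hK
  have hmemK : ∀ p, p ∈ K ↔ (0 < p ∧ N ≤ h p) := by
    intro p; rw [hK, Set.Finite.mem_toFinset]; rfl
  have haK : a ∈ K := (hmemK a).mpr ⟨ha', le_refl N⟩
  have hcK : c ∉ K := fun hx => by have := ((hmemK c).mp hx).2; omega
  have hdK : d ∉ K := fun hx => by have := ((hmemK d).mp hx).2; omega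
  refine ⟨K.card, K, rfl, fun i hi => ((hmemK i).mp hi).1, ?_⟩
  intro S hScard hSpos
  set k := K.card with hk
  set S₁ := S ∩ K.erase a with hS₁
  have hS₁S : S₁ ⊆ S := Finset.inter_subset_left
  have hS₁K : S₁ ⊆ K.erase a := Finset.inter_subset_right
  set m := S₁.card with hm
  have hKerase : (K.erase a).card = k - 1 := by rw [Finset.card_erase_of_mem haK]
  have hk1 : 1 ≤ k := Finset.card_pos.mpr ⟨a, haK⟩
  have hmk : m ≤ k - 1 := hKerase ▸ Finset.card_le_card hS₁K
  -- S₁ avoids a, c, d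
  have hS₁a : a ∉ S₁ := fun hx => (Finset.mem_erase.mp (hS₁K hx)).1 rfl
  have hS₁c : c ∉ S₁ := fun hx => hcK (Finset.mem_of_mem_erase (hS₁K hx))
  have hS₁d : d ∉ S₁ := fun hx => hdK (Finset.mem_of_mem_erase (hS₁K hx))
  have hsum1 : ∑ i ∈ S₁, f i = ∑ i ∈ S₁, h i := sum_congr_outside heq S₁ hS₁a hS₁c hS₁d
  -- bound on f over S \ S₁
  have hbound : ∀ p ∈ S \ S₁, f p ≤ N - 1 := by
    intro p hp
    obtain ⟨hpS, hpS₁⟩ := Finset.mem_sdiff.mp hp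
    by_cases hpa : p = a
    · subst hpa; omega
    by_cases hpc : p = c
    · subst hpc; omega
    by_cases hpd : p = d
    · subst hpd; omega
    have hpK : p ∉ K := by
      intro hx
      exact hpS₁ (Finset.mem_inter.mpr ⟨hpS, Finset.mem_erase.mpr ⟨hpa, hx⟩⟩)
    have : ¬(0 < p ∧ N ≤ h p) := fun hx => hpK ((hmemK p).mpr hx)
    have hp0 : 0 < p := hSpos p hpS
    have := heq p hpa hpc hpd
    omega
  have hsdcard : (S \ S₁).card = k - m := by
    rw [Finset.card_sdiff_of_subset hS₁S, hScard]
  have hup : ∑ i ∈ S, f i ≤ ∑ i ∈ S₁, h i + (k - m) * (N - 1) := by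
    rw [← Finset.sum_sdiff hS₁S, ← hsum1]
    have h1 : ∑ i ∈ S \ S₁, f i ≤ (S \ S₁).card * (N - 1) :=
      Finset.sum_le_card_nsmul _ _ _ hbound
    rw [hsdcard] at h1
    omega
  -- lower bound for sum over K
  have hlow : ∑ i ∈ K, h i ≥ ∑ i ∈ S₁, h i + (k - 1 - m) * N + N := by
    rw [← Finset.add_sum_erase K h haK, ← Finset.sum_sdiff hS₁K]
    have h1 : ∑ i ∈ (K.erase a) \ S₁, h i ≥ ((K.erase a) \ S₁).card * N := by
      apply Finset.card_nsmul_le_sum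
      intro p hp
      exact ((hmemK p).mp (Finset.mem_of_mem_erase (Finset.mem_sdiff.mp hp).1)).2
    have h2 : ((K.erase a) \ S₁).card = k - 1 - m := by
      rw [Finset.card_sdiff_of_subset hS₁K, hKerase]
    rw [h2] at h1
    omega
  -- combine
  have hfin : (k - m) * (N - 1) < (k - 1 - m) * N + N := by
    have hkm : 1 ≤ k - m := by omega
    have expand : (k - 1 - m) * N + N = (k - m) * N := by
      have : k - 1 - m + 1 = k - m := by omega
      rw [← this]; ring
    rw [expand]
    exact Nat.mul_lt_mul_of_le_of_lt (le_refl _) (by omega) (by omega)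
  omega

section codeFacts

variable {v w : Equiv.Perm ℤ} {i a b c d : ℤ}

lemma cf_heq (hac : a < c) (hcd : c < d) (hdb : d < b)
    (hG : ∀ x : ℤ, w x = if v x = i then i+2 else if v x = i+1 then i+3
        else if v x = i+2 then i else if v x = i+3 then i+1 else v x)
    (dict : ∀ x : ℤ, (v x = i ↔ x = a) ∧ (v x = i+1 ↔ x = b) ∧
      (v x = i+2 ↔ x = c) ∧ (v x = i+3 ↔ x = d))
    (hvb : v b = i+1) (hwb_val : w b = i+3) :
    ∀ p, p ≠ a → p ≠ c → p ≠ d → codeZ v p = codeZ w p := by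
  intro p hpa hpc hpd
  have hset : {j : ℤ | p < j ∧ v j < v p} = {j : ℤ | p < j ∧ w j < w p} := by
    by_cases hpb : p = b
    · subst hpb
      ext j
      simp only [Set.mem_setOf_eq]
      constructor
      · rintro ⟨h1, h2⟩
        refine ⟨h1, ?_⟩
        have hj := dict j
        rw [hG j, hwb_val]
        rw [hvb] at h2
        omega
      · rintro ⟨h1, h2⟩
        refine ⟨h1, ?_⟩
        have hj := dict j
        rw [hG j, hwb_val] at h2
        rw [hvb]
        omega
    · have hvpa : v p ≠ i := fun e => hpa ((dict p).1.mp e)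
      have hvpb : v p ≠ i+1 := fun e => hpb ((dict p).2.1.mp e)
      have hvpc : v p ≠ i+2 := fun e => hpc ((dict p).2.2.1.mp e)
      have hvpd : v p ≠ i+3 := fun e => hpd ((dict p).2.2.2.mp e)
      have hwp : w p = v p := by
        rw [hG p, if_neg hvpa, if_neg hvpb, if_neg hvpc, if_neg hvpd]
      ext j
      simp only [Set.mem_setOf_eq]
      have hj := dict j
      rw [hG j, hwp]
      omega
  rw [codeZ, codeZ, hset]

lemma cf_hfa (hac : a < c) (hcd : c < d) (hdb : d < b)
    (hfv : (InvSet v).Finite)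
    (hG : ∀ x : ℤ, w x = if v x = i then i+2 else if v x = i+1 then i+3
        else if v x = i+2 then i else if v x = i+3 then i+1 else v x)
    (dict : ∀ x : ℤ, (v x = i ↔ x = a) ∧ (v x = i+1 ↔ x = b) ∧
      (v x = i+2 ↔ x = c) ∧ (v x = i+3 ↔ x = d))
    (hva : v a = i) (hvc : v c = i+2) (hvd : v d = i+3) (hwa_val : w a = i+2) :
    codeZ w a = codeZ v a + 2 := by
  have hset : {j : ℤ | a < j ∧ w j < w a} =
      insert c (insert d {j : ℤ | a < j ∧ v j < v a}) := by
    ext j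
    simp only [Set.mem_setOf_eq, Set.mem_insert_iff]
    rw [hG j, hwa_val, hva]
    have d1 := dict j
    omega
  have hfin : {j : ℤ | a < j ∧ v j < v a}.Finite := code_set_finite v hfv a
  have hd_not : d ∉ {j : ℤ | a < j ∧ v j < v a} := by
    simp only [Set.mem_setOf_eq]; rw [hvd, hva]; omega
  have hc_not : c ∉ insert d {j : ℤ | a < j ∧ v j < v a} := by
    simp only [Set.mem_insert_iff, Set.mem_setOf_eq]; rw [hvc, hva]; omega
  rw [codeZ, hset, Set.ncard_insert_of_notMem hc_not (hfin.insert d),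
    Set.ncard_insert_of_notMem hd_not hfin]
  rfl

lemma cf_hfc (hac : a < c) (hcd : c < d) (hdb : d < b)
    (hfw : (InvSet w).Finite)
    (hG : ∀ x : ℤ, w x = if v x = i then i+2 else if v x = i+1 then i+3
        else if v x = i+2 then i else if v x = i+3 then i+1 else v x)
    (dict : ∀ x : ℤ, (v x = i ↔ x = a) ∧ (v x = i+1 ↔ x = b) ∧
      (v x = i+2 ↔ x = c) ∧ (v x = i+3 ↔ x = d))
    (hvc : v c = i+2) (hwb_val : w b = i+3) (hwc_val : w c = i) :
    codeZ v c = codeZ w c + 1 := by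
  have hset : {j : ℤ | c < j ∧ v j < v c} =
      insert b {j : ℤ | c < j ∧ w j < w c} := by
    ext j
    simp only [Set.mem_setOf_eq, Set.mem_insert_iff]
    rw [hG j, hwc_val, hvc]
    have d1 := dict j
    omega
  have hfin : {j : ℤ | c < j ∧ w j < w c}.Finite := code_set_finite w hfw c
  have hb_not : b ∉ {j : ℤ | c < j ∧ w j < w c} := by
    simp only [Set.mem_setOf_eq]; rw [hwb_val, hwc_val]; omega
  rw [codeZ, codeZ, hset, Set.ncard_insert_of_notMem hb_not hfin]

lemma cf_hfd (hac : a < c) (hcd : c < d) (hdb : d < b)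
    (hfw : (InvSet w).Finite)
    (hG : ∀ x : ℤ, w x = if v x = i then i+2 else if v x = i+1 then i+3
        else if v x = i+2 then i else if v x = i+3 then i+1 else v x)
    (dict : ∀ x : ℤ, (v x = i ↔ x = a) ∧ (v x = i+1 ↔ x = b) ∧
      (v x = i+2 ↔ x = c) ∧ (v x = i+3 ↔ x = d))
    (hvd : v d = i+3) (hwb_val : w b = i+3) (hwd_val : w d = i+1) :
    codeZ v d = codeZ w d + 1 := by
  have hset : {j : ℤ | d < j ∧ v j < v d} =
      insert b {j : ℤ | d < j ∧ w j < w d} := by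
    ext j
    simp only [Set.mem_setOf_eq, Set.mem_insert_iff]
    rw [hG j, hwd_val, hvd]
    have d1 := dict j
    omega
  have hfin : {j : ℤ | d < j ∧ w j < w d}.Finite := code_set_finite w hfw d
  have hb_not : b ∉ {j : ℤ | d < j ∧ w j < w d} := by
    simp only [Set.mem_setOf_eq]; rw [hwb_val, hwd_val]; omega
  rw [codeZ, codeZ, hset, Set.ncard_insert_of_notMem hb_not hfin]

lemma cf_hca (hac : a < c) (hcd : c < d) (hdb : d < b)
    (hfv : (InvSet v).Finite)
    (hG : ∀ x : ℤ, w x = if v x = i then i+2 else if v x = i+1 then i+3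
        else if v x = i+2 then i else if v x = i+3 then i+1 else v x)
    (dict : ∀ x : ℤ, (v x = i ↔ x = a) ∧ (v x = i+1 ↔ x = b) ∧
      (v x = i+2 ↔ x = c) ∧ (v x = i+3 ↔ x = d))
    (hva : v a = i) (hwc_val : w c = i) :
    codeZ w c ≤ codeZ v a := by
  apply Set.ncard_le_ncard _ (code_set_finite v hfv a)
  intro j hj
  simp only [Set.mem_setOf_eq] at hj ⊢
  rw [hG j, hwc_val] at hj
  rw [hva]
  have d1 := dict j
  omega

lemma cf_hda (hac : a < c) (hcd : c < d) (hdb : d < b)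
    (hfv : (InvSet v).Finite)
    (hG : ∀ x : ℤ, w x = if v x = i then i+2 else if v x = i+1 then i+3
        else if v x = i+2 then i else if v x = i+3 then i+1 else v x)
    (dict : ∀ x : ℤ, (v x = i ↔ x = a) ∧ (v x = i+1 ↔ x = b) ∧
      (v x = i+2 ↔ x = c) ∧ (v x = i+3 ↔ x = d))
    (hva : v a = i) (hwd_val : w d = i+1) :
    codeZ w d ≤ codeZ v a := by
  apply Set.ncard_le_ncard _ (code_set_finite v hfv a)
  intro j hj
  simp only [Set.mem_setOf_eq] at hj ⊢
  rw [hG j, hwd_val] at hj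
  rw [hva]
  have d1 := dict j
  omega

lemma cf_sinf (hi : 0 < i)
    (hG : ∀ x : ℤ, w x = if v x = i then i+2 else if v x = i+1 then i+3
        else if v x = i+2 then i else if v x = i+3 then i+1 else v x)
    (hsv : v ∈ SInf) : w ∈ SInf := by
  constructor
  · apply Set.Finite.subset (hsv.1.union (Set.finite_Icc i (i+3)))
    intro x hx
    have hx' : w x ≠ x := hx
    simp only [Set.mem_union, Set.mem_setOf_eq, Set.mem_Icc]
    by_cases hvx : v x = x
    · right; rw [hG x, hvx] at hx'; omega
    · left; exact hvx
  · intro x hx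
    by_cases hvx : v x = x
    · rw [hG x, hvx] at hx; omega
    · exact hsv.2 x hvx

end codeFacts

lemma covering_main {v w : Equiv.Perm ℤ} (hsv : v ∈ SInf) (h : AtomRel v w) :
    w ∈ SInf ∧ (∀ k, shapeSum v k ≤ shapeSum w k) ∧ ∃ k, shapeSum v k < shapeSum w k := by
  obtain ⟨i, hi, hfv, hfw, hac, hcd, hdb, hG⟩ := atom_facts h
  clear h
  obtain ⟨a, hadef⟩ : ∃ a, v⁻¹ i = a := ⟨_, rfl⟩
  obtain ⟨b, hbdef⟩ : ∃ b, v⁻¹ (i+1) = b := ⟨_, rfl⟩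
  obtain ⟨c, hcdef⟩ : ∃ c, v⁻¹ (i+2) = c := ⟨_, rfl⟩
  obtain ⟨d, hddef⟩ : ∃ d, v⁻¹ (i+3) = d := ⟨_, rfl⟩
  rw [hadef, hcdef] at hac
  rw [hcdef, hddef] at hcd
  rw [hddef, hbdef] at hdb
  have hva : v a = i := by rw [← hadef]; exact perm_apply_inv_self' v i
  have hvb : v b = i+1 := by rw [← hbdef]; exact perm_apply_inv_self' v (i+1)
  have hvc : v c = i+2 := by rw [← hcdef]; exact perm_apply_inv_self' v (i+2)
  have hvd : v d = i+3 := by rw [← hddef]; exact perm_apply_inv_self' v (i+3)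
  have dict : ∀ x : ℤ, (v x = i ↔ x = a) ∧ (v x = i+1 ↔ x = b) ∧
      (v x = i+2 ↔ x = c) ∧ (v x = i+3 ↔ x = d) := by
    intro x
    refine ⟨⟨fun e => v.injective (by rw [e, hva]), fun e => by rw [e, hva]⟩,
      ⟨fun e => v.injective (by rw [e, hvb]), fun e => by rw [e, hvb]⟩,
      ⟨fun e => v.injective (by rw [e, hvc]), fun e => by rw [e, hvc]⟩,
      ⟨fun e => v.injective (by rw [e, hvd]), fun e => by rw [e, hvd]⟩⟩
  have hwa_val : w a = i+2 := by rw [hG a, hva]; simp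
  have hwb_val : w b = i+3 := by
    rw [hG b, hvb, if_neg (by omega), if_pos rfl]
  have hwc_val : w c = i := by
    rw [hG c, hvc, if_neg (by omega), if_neg (by omega), if_pos rfl]
  have hwd_val : w d = i+1 := by
    rw [hG d, hvd, if_neg (by omega), if_neg (by omega), if_neg (by omega), if_pos rfl]
  have hsw : w ∈ SInf := cf_sinf hi hG hsv
  have ha' : 0 < a := by
    by_cases hvaa : v a = a
    · omega
    · exact hsv.2 a hvaa
  have heq := cf_heq hac hcd hdb hG dict hvb hwb_val
  have hfa := cf_hfa hac hcd hdb hfv hG dict hva hvc hvd hwa_val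
  have hfc := cf_hfc hac hcd hdb hfw hG dict hvc hwb_val hwc_val
  have hfd := cf_hfd hac hcd hdb hfw hG dict hvd hwb_val hwd_val
  have hca := cf_hca hac hcd hdb hfv hG dict hva hwc_val
  have hda := cf_hda hac hcd hdb hfv hG dict hva hwd_val
  have hacne : a ≠ c := by omega
  have hadne : a ≠ d := by omega
  have hcdne : c ≠ d := by omega
  refine ⟨hsw, ?_, ?_⟩
  · intro k
    obtain ⟨S, hcard, hpos, hval⟩ := shapeSum_mem v hfv k
    obtain ⟨S', h1, h2, h3⟩ := sum_le_abstract hacne hadne hcdne ha' hfa hfc hfd hca hda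
      heq S hpos
    rw [hval]
    exact h3.trans (le_shapeSum w hfw k S' (h1.trans hcard) h2)
  · have hKfin : {p : ℤ | 0 < p ∧ codeZ w a ≤ codeZ w p}.Finite := by
      apply Set.Finite.subset (hfw.image Prod.fst)
      intro p hp
      obtain ⟨hp0, hpN⟩ := hp
      have hne : codeZ w p ≠ 0 := by omega
      obtain ⟨j, hj⟩ := Set.nonempty_of_ncard_ne_zero hne
      exact ⟨(p, j), hj, rfl⟩
    obtain ⟨k, K, hKcard, hKpos, hKlt⟩ := strict_abstract hacne hadne hcdne ha' hfa hfc hfd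
      hca hda heq hKfin
    refine ⟨k, ?_⟩
    obtain ⟨S, hcard, hpos, hval⟩ := shapeSum_mem v hfv k
    rw [hval]
    exact lt_of_lt_of_le (hKlt S hcard hpos) (le_shapeSum w hfw k K hKcard hKpos)

/-- if `z ∈ F_∞` and `v, w ∈ A_FPF(z)` with `v <_A w`, then
`λ(v) < λ(w)` strictly in the dominance order (all partial sums of `λ(v)` are at most
those of `λ(w)`, with strict inequality somewhere). -/
theorem shape_lt_of_atomRel (z v w : Equiv.Perm ℤ) (hz : z ∈ FInf)
    (hv : v ∈ AFPF z) (hw : w ∈ AFPF z) (hvw : Relation.TransGen AtomRel v w) :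
    (∀ k : ℕ, shapeSum v k ≤ shapeSum w k) ∧ (∃ k : ℕ, shapeSum v k < shapeSum w k) := by
  have hv1 : v ∈ SInf := hv.1
  have key : ∀ u, Relation.TransGen AtomRel v u →
      u ∈ SInf ∧ (∀ k, shapeSum v k ≤ shapeSum u k) ∧ ∃ k, shapeSum v k < shapeSum u k := by
    intro u hu
    induction hu with
    | single h => exact covering_main hv1 h
    | tail _ hstep ih =>
      obtain ⟨hsu, hle, k0, hlt⟩ := ih
      obtain ⟨hsw', hle2, _, _⟩ := covering_main hsu hstep
      exact ⟨hsw', fun k => (hle k).trans (hle2 k), k0, lt_of_lt_of_le hlt (hle2 k0)⟩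
  obtain ⟨_, h1, h2⟩ := key w hvw
  exact ⟨h1, h2⟩
end
end
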